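/- arXiv:1307.0168 — 6 statements merged into one kernel-verified Lean document; each statement's English description precedes it below -/
import Mathlib

section
/- Let G be a non-complete simple graph on n vertices that contains no clique of size r+1 (r ≥ 2). Then the algebraic connectivity satisfies α(G) ≤ n - ⌈n/r⌉. -/
open SimpleGraph Matrix BigOperators

/-- The algebraic connectivity of a graph on a finite vertex set: the second-smallest
Laplacian eigenvalue, characterized as the infimum of Rayleigh quotients of the
Laplacian over nonzero vectors orthogonal to the all-ones vector. -/
noncomputable def algConn {V : Type*} [Fintype V] (G : SimpleGraph V) : ℝ :=
  letI := Classical.decEq V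
  letI := Classical.decRel G.Adj
  sInf { a : ℝ | ∃ x : V → ℝ, x ≠ 0 ∧ ∑ v, x v = 0 ∧
    a = (x ⬝ᵥ (G.lapMatrix ℝ).mulVec x) / (x ⬝ᵥ x) }

lemma lap_nonneg {V : Type*} [Fintype V] [DecidableEq V] (G : SimpleGraph V)
    [DecidableRel G.Adj] (y : V → ℝ) : 0 ≤ y ⬝ᵥ (G.lapMatrix ℝ *ᵥ y) := by
  have h := (SimpleGraph.posSemidef_lapMatrix ℝ G).dotProduct_mulVec_nonneg y
  simpa using h

lemma dot_self_nonneg' {V : Type*} [Fintype V] (y : V → ℝ) : 0 ≤ y ⬝ᵥ y :=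
  Finset.sum_nonneg fun i _ => mul_self_nonneg _

lemma rayleigh_bound {V : Type*} [Fintype V] [DecidableEq V] (G : SimpleGraph V)
    [DecidableRel G.Adj] (v : V) (S : Finset V) (hv : v ∈ S) (h2 : 2 ≤ S.card)
    (hS : ∀ w ∈ S, ¬ G.Adj v w) (x : V → ℝ)
    (hx1 : x v = 1)
    (hx2 : ∀ w ∈ S, w ≠ v → x w = -(1/((S.card : ℝ)-1)))
    (hx3 : ∀ w, w ∉ S → x w = 0) :
    x ⬝ᵥ (G.lapMatrix ℝ *ᵥ x) / (x ⬝ᵥ x) ≤ (Fintype.card V : ℝ) - S.card := by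
  classical
  have hs2 : (2:ℝ) ≤ (S.card : ℝ) := by exact_mod_cast h2
  set s : ℝ := (S.card : ℝ) with hsdef
  have hs1 : (0:ℝ) < s - 1 := by linarith
  set c : ℝ := 1/(s-1) with hcdef
  have hc0 : 0 < c := by positivity
  set a : V → ℝ := fun w => if w = v then 1 else if w ∈ S then c^2 else 0 with hadef
  set b : V → ℝ := fun w => if w ∈ S then 0 else 1 with hbdef
  have ha0 : ∀ w, 0 ≤ a w := by
    intro w; simp only [hadef]; split_ifs <;> positivity
  have hb0 : ∀ w, 0 ≤ b w := by
    intro w; simp only [hbdef]; split_ifs <;> norm_num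
  have hax : ∀ w, x w * x w = a w := by
    intro w
    by_cases h1 : w = v
    · subst h1; simp [hadef, hx1]
    · by_cases h2' : w ∈ S
      · rw [hx2 w h2' h1]; simp only [hadef, h1, if_false, h2', if_true]; ring
      · rw [hx3 w h2']; simp [hadef, h1, h2']
  have hsa : ∑ w, a w = 1 + (s-1) * c^2 := by
    have hrw : ∀ w, a w = (if w = v then 1 - c^2 else 0) + (if w ∈ S then c^2 else 0) := by
      intro w
      by_cases h1 : w = v
      · subst h1; simp [hadef, hv]
      · by_cases h2' : w ∈ S <;> simp [hadef, h1, h2']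
    simp_rw [hrw]
    rw [Finset.sum_add_distrib, Fintype.sum_ite_eq', Fintype.sum_ite_mem,
      Finset.sum_const, nsmul_eq_mul]
    rw [← hsdef]; ring
  have hden : x ⬝ᵥ x = 1 + (s-1) * c^2 := by
    rw [dotProduct]; simp_rw [hax]; exact hsa
  have hdenpos : 0 < x ⬝ᵥ x := by rw [hden]; positivity
  have hsb : ∑ w, b w = (Fintype.card V : ℝ) - s := by
    have hrw : ∀ w, b w = 1 - (if w ∈ S then (1:ℝ) else 0) := by
      intro w; by_cases h : w ∈ S <;> simp [hbdef, h]
    simp_rw [hrw]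
    rw [Finset.sum_sub_distrib, Finset.sum_const, Fintype.sum_ite_mem, Finset.sum_const]
    simp [hsdef, Finset.card_univ]
  have hterm : ∀ i j, (if G.Adj i j then (x i - x j)^2 else 0) ≤ a i * b j + a j * b i := by
    intro i j
    by_cases hadj : G.Adj i j
    · rw [if_pos hadj]
      by_cases hi : i = v
      · have hjS : j ∉ S := fun h => hS j h (hi ▸ hadj)
        have hjv : j ≠ v := fun h => hjS (h ▸ hv)
        rw [hi, hx1, hx3 j hjS]
        simp [hadef, hbdef, hjS, hjv, hv]
      · by_cases hj : j = v
        · have hiS : i ∉ S := fun h => hS i h (hj ▸ hadj.symm)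
          rw [hj, hx1, hx3 i hiS]
          simp [hadef, hbdef, hiS, hi, hv]
        · by_cases hiS : i ∈ S <;> by_cases hjS : j ∈ S
          · rw [hx2 i hiS hi, hx2 j hjS hj]
            simp only [hadef, hbdef, hi, hj, hiS, hjS, if_false, if_true, sub_self]
            norm_num
          · rw [hx2 i hiS hi, hx3 j hjS]
            simp only [hadef, hbdef, hi, hj, hiS, hjS, if_false, if_true]
            ring_nf
            nlinarith [sq_nonneg c]
          · rw [hx2 j hjS hj, hx3 i hiS]
            simp only [hadef, hbdef, hi, hj, hiS, hjS, if_false, if_true]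
            ring_nf
            nlinarith [sq_nonneg c]
          · rw [hx3 i hiS, hx3 j hjS]
            simp [hadef, hbdef, hiS, hjS, hi, hj]
    · rw [if_neg hadj]
      exact add_nonneg (mul_nonneg (ha0 i) (hb0 j)) (mul_nonneg (ha0 j) (hb0 i))
  have hquad : x ⬝ᵥ (G.lapMatrix ℝ *ᵥ x) =
      (∑ i, ∑ j, if G.Adj i j then (x i - x j)^2 else 0)/2 := by
    rw [← Matrix.toLinearMap₂'_apply', SimpleGraph.lapMatrix_toLinearMap₂']
  have hsum2 : (∑ i, ∑ j, (a i * b j + a j * b i)) =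
      2 * ((1 + (s-1)*c^2) * ((Fintype.card V : ℝ) - s)) := by
    have e1 : ∀ i, ∑ j, (a i * b j + a j * b i) = a i * (∑ j, b j) + (∑ j, a j) * b i := by
      intro i
      rw [Finset.sum_add_distrib, ← Finset.mul_sum, ← Finset.sum_mul]
    simp_rw [e1]
    rw [Finset.sum_add_distrib, ← Finset.sum_mul, ← Finset.mul_sum, hsa, hsb]
    ring
  have hnum : x ⬝ᵥ (G.lapMatrix ℝ *ᵥ x) ≤
      ((Fintype.card V : ℝ) - s) * (1 + (s-1)*c^2) := by
    rw [hquad]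
    have h1 : (∑ i, ∑ j, if G.Adj i j then (x i - x j)^2 else 0) ≤
        ∑ i, ∑ j, (a i * b j + a j * b i) :=
      Finset.sum_le_sum fun i _ => Finset.sum_le_sum fun j _ => hterm i j
    rw [hsum2] at h1
    linarith
  rw [div_le_iff₀ hdenpos, hden]
  exact hnum

lemma exists_nonadj_pair {V : Type*} (G : SimpleGraph V) (h : G ≠ ⊤) :
    ∃ u w, u ≠ w ∧ ¬ G.Adj u w := by
  by_contra hc
  push_neg at hc
  apply h
  ext u w
  simp only [SimpleGraph.top_adj]
  exact ⟨fun ha => ha.ne, fun hne => hc u w hne⟩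

lemma exists_nonadj_set {V : Type*} [Fintype V] [Nonempty V] (G : SimpleGraph V) {r : ℕ}
    (hfree : G.CliqueFree (r+1)) :
    ∃ (v : V) (S : Finset V), v ∈ S ∧ (∀ w ∈ S, ¬ G.Adj v w) ∧
      Fintype.card V ≤ S.card * r := by
  classical
  have hne : ((Finset.univ : Finset V).powerset.filter
      (fun t : Finset V => G.IsClique (t : Set V))).Nonempty := by
    refine ⟨{Classical.arbitrary V}, Finset.mem_filter.2 ⟨Finset.mem_powerset.2 (Finset.subset_univ _), ?_⟩⟩
    simpa using G.isClique_singleton (Classical.arbitrary V)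
  obtain ⟨K, hKmem, hKmax⟩ := Finset.exists_max_image _ Finset.card hne
  have hK : G.IsClique (K : Set V) := (Finset.mem_filter.1 hKmem).2
  have hKcard : K.card ≤ r := by
    by_contra hgt
    push_neg at hgt
    obtain ⟨t, htK, htcard⟩ := Finset.exists_subset_card_eq (s := K) (n := r+1) hgt
    exact hfree t ⟨hK.subset (Finset.coe_subset.mpr htK), htcard⟩
  have hchoice : ∀ w : V, ∃ u, u ∈ K ∧ ¬ G.Adj u w := by
    intro w
    by_contra hc
    push_neg at hc
    have hwK : w ∉ K := fun hw => G.irrefl (hc w hw)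
    have hclique : G.IsClique ((insert w K : Finset V) : Set V) := by
      rw [Finset.coe_insert]
      exact hK.insert (fun b hb _ => (hc b hb).symm)
    have hmem2 : (insert w K : Finset V) ∈
        (Finset.univ : Finset V).powerset.filter (fun t : Finset V => G.IsClique (t : Set V)) :=
      Finset.mem_filter.2 ⟨Finset.mem_powerset.2 (Finset.subset_univ _), hclique⟩
    have hle := hKmax _ hmem2
    rw [Finset.card_insert_of_notMem hwK] at hle
    omega
  choose f hfK hfna using hchoice
  have hKne : K.Nonempty := ⟨f (Classical.arbitrary V), hfK _⟩
  have hsum : ∑ u ∈ K, (Finset.univ.filter (fun w => f w = u)).card = Fintype.card V := by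
    rw [← Finset.card_univ]
    exact (Finset.card_eq_sum_card_fiberwise (fun w _ => hfK w)).symm
  have hex : ∃ u ∈ K, Fintype.card V ≤ K.card * (Finset.univ.filter (fun w => f w = u)).card := by
    by_contra hc
    push_neg at hc
    have hlt : ∑ u ∈ K, K.card * (Finset.univ.filter (fun w => f w = u)).card <
        ∑ _u ∈ K, Fintype.card V := Finset.sum_lt_sum_of_nonempty hKne hc
    rw [← Finset.mul_sum, hsum, Finset.sum_const, smul_eq_mul] at hlt
    omega
  obtain ⟨u, huK, hub⟩ := hex
  refine ⟨u, Finset.univ.filter (fun w => f w = u), ?_, ?_, ?_⟩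
  · have hfu : f u = u := by
      by_contra hne
      exact hfna u (hK (hfK u) huK hne)
    simp [hfu]
  · intro w hw hadj
    have hfw : f w = u := (Finset.mem_filter.1 hw).2
    exact hfna w (hfw ▸ hadj)
  · calc Fintype.card V ≤ K.card * (Finset.univ.filter (fun w => f w = u)).card := hub
      _ ≤ r * (Finset.univ.filter (fun w => f w = u)).card :=
          Nat.mul_le_mul_right _ hKcard
      _ = (Finset.univ.filter (fun w => f w = u)).card * r := mul_comm _ _

lemma main_bound {n : ℕ} (G : SimpleGraph (Fin n)) (v : Fin n) (S : Finset (Fin n))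
    (hv : v ∈ S) (h2 : 2 ≤ S.card) (hS : ∀ w ∈ S, ¬ G.Adj v w) :
    algConn G ≤ (n : ℝ) - S.card := by
  classical
  set c : ℝ := 1/((S.card : ℝ)-1) with hcdef
  have hs2 : (2:ℝ) ≤ (S.card : ℝ) := by exact_mod_cast h2
  have hs1 : ((S.card : ℝ) - 1) ≠ 0 := by intro h; linarith [h]
  set x : Fin n → ℝ := fun w => if w = v then 1 else if w ∈ S then -c else 0 with hxdef
  have hx1 : x v = 1 := by simp [hxdef]
  have hx2 : ∀ w ∈ S, w ≠ v → x w = -(1/((S.card : ℝ)-1)) := by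
    intro w hw hne; simp [hxdef, hne, hw, hcdef]
  have hx3 : ∀ w, w ∉ S → x w = 0 := by
    intro w hw
    have hne : w ≠ v := fun h => hw (h ▸ hv)
    simp [hxdef, hne, hw]
  have hx0 : x ≠ 0 := by
    intro h
    have h1 : x v = 0 := by rw [h]; rfl
    rw [hx1] at h1; exact one_ne_zero h1
  have hsum : ∑ w, x w = 0 := by
    have hrw : ∀ w, x w = (if w = v then 1 + c else 0) - (if w ∈ S then c else 0) := by
      intro w
      by_cases ha : w = v
      · subst ha; simp [hxdef, hv]
      · by_cases hb : w ∈ S <;> simp [hxdef, ha, hb]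
    simp_rw [hrw]
    rw [Finset.sum_sub_distrib, Fintype.sum_ite_eq', Fintype.sum_ite_mem,
      Finset.sum_const, nsmul_eq_mul]
    rw [hcdef]
    field_simp
    ring
  unfold algConn
  have hmat : ∀ (i1 : DecidableRel G.Adj) (i2 : DecidableEq (Fin n)),
      (@SimpleGraph.lapMatrix (Fin n) ℝ _ G i1 i2 _) =
      (@SimpleGraph.lapMatrix (Fin n) ℝ _ G
        (fun a b => Classical.propDecidable (G.Adj a b)) (instDecidableEqFin n) _) := by
    intro i1 i2
    have e1 : i1 = (fun a b => Classical.propDecidable (G.Adj a b)) := Subsingleton.elim _ _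
    have e2 : i2 = instDecidableEqFin n := Subsingleton.elim _ _
    subst e1; subst e2; rfl
  refine le_trans (csInf_le ?_ ⟨x, hx0, hsum, rfl⟩) ?_
  · refine ⟨0, fun q hq => ?_⟩
    obtain ⟨y, -, -, rfl⟩ := hq
    rw [hmat]
    exact div_nonneg (lap_nonneg G y) (dot_self_nonneg' y)
  · have hcf : ((n:ℝ)) = (Fintype.card (Fin n) : ℝ) := by simp
    rw [hcf, hmat]
    apply rayleigh_bound G v S hv h2 hS x hx1 hx2 hx3

theorem stmt3 {n r : ℕ} (hr : 2 ≤ r) (G : SimpleGraph (Fin n)) (hnc : G ≠ ⊤)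
    (hfree : G.CliqueFree (r + 1)) :
    algConn G ≤ (n : ℝ) - ⌈(n : ℝ) / (r : ℝ)⌉ := by
  classical
  obtain ⟨u, w, huw, hnadj⟩ := exists_nonadj_pair G hnc
  have : Nonempty (Fin n) := ⟨u⟩
  have hr0 : (0:ℝ) < (r:ℝ) := by
    have : (0:ℕ) < r := by omega
    exact_mod_cast this
  obtain ⟨v, S, hvS, hSna, hcard⟩ := exists_nonadj_set G hfree
  rw [Fintype.card_fin] at hcard
  by_cases hS2 : 2 ≤ S.card
  · have key := main_bound G v S hvS hS2 hSna
    have hceil : ((⌈(n:ℝ)/(r:ℝ)⌉ : ℤ) : ℝ) ≤ (S.card : ℝ) := by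
      have hdiv : (n:ℝ)/(r:ℝ) ≤ ((S.card : ℤ) : ℝ) := by
        rw [div_le_iff₀ hr0]
        push_cast
        exact_mod_cast hcard
      have := Int.ceil_le.mpr hdiv
      exact_mod_cast this
    linarith
  · push_neg at hS2
    have hScard1 : S.card ≤ 1 := by omega
    have hnr : n ≤ r := le_trans hcard (by nlinarith)
    have hpair : ∀ z ∈ ({u, w} : Finset (Fin n)), ¬ G.Adj u z := by
      intro z hz
      rcases Finset.mem_insert.1 hz with h | h
      · subst h; exact G.irrefl
      · rw [Finset.mem_singleton.1 h]; exact hnadj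
    have hcard2 : ({u, w} : Finset (Fin n)).card = 2 := by
      rw [Finset.card_insert_of_notMem (by simpa using huw), Finset.card_singleton]
    have key := main_bound G u ({u, w} : Finset (Fin n)) (Finset.mem_insert_self _ _)
      (le_of_eq hcard2.symm) hpair
    rw [hcard2] at key
    have hceil : ((⌈(n:ℝ)/(r:ℝ)⌉ : ℤ) : ℝ) ≤ 2 := by
      have hdiv : (n:ℝ)/(r:ℝ) ≤ ((2 : ℤ) : ℝ) := by
        rw [div_le_iff₀ hr0]
        push_cast
        have : (n:ℝ) ≤ (r:ℝ) := by exact_mod_cast hnr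
        linarith
      have := Int.ceil_le.mpr hdiv
      exact_mod_cast this
    push_cast at key ⊢
    linarith
end

section
/- Let G be a non-complete simple graph on n vertices not containing K_{r+1}, where r divides n. If α(G) = n - n/r, then G is isomorphic to the Turán graph T_{n,r}. -/
open SimpleGraph Matrix BigOperators

/-- The number of elements of `Fin n` in a given residue class mod `r`, when `r ∣ n`. -/
lemma resCount {n r : ℕ} (hr : 0 < r) (hdvd : r ∣ n) {c : ℕ} (hc : c < r) :
    (Finset.univ.filter (fun w : Fin n => (w : ℕ) % r = c)).card = n / r := by
  rw [← Fintype.card_fin (n / r), ← Finset.card_univ]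
  refine Finset.card_bij'
    (fun w _ => (⟨(w : ℕ) / r, Nat.div_lt_div_of_lt_of_dvd hdvd w.2⟩ : Fin (n / r)))
    (fun k _ => (⟨(k : ℕ) * r + c, by
      have h1 : (k : ℕ) * r + c < ((k : ℕ) + 1) * r := by rw [add_one_mul]; omega
      have h2 : ((k : ℕ) + 1) * r ≤ (n / r) * r := Nat.mul_le_mul_right r k.2
      rw [Nat.div_mul_cancel hdvd] at h2
      omega⟩ : Fin n)) ?_ ?_ ?_ ?_
  · intro a _; exact Finset.mem_univ _
  · intro k _
    simp only [Finset.mem_filter, Finset.mem_univ, true_and]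
    rw [mul_comm, Nat.mul_add_mod, Nat.mod_eq_of_lt hc]
  · intro w hw
    simp only [Finset.mem_filter, Finset.mem_univ, true_and] at hw
    apply Fin.ext
    simp only
    rw [← hw, Nat.div_add_mod']
  · intro k _
    apply Fin.ext
    simp only
    rw [mul_comm, Nat.mul_add_div hr, Nat.div_eq_of_lt hc, add_zero]

/-- Degrees in the Turán graph when `r ∣ n`. -/
lemma turanDeg {n r : ℕ} (hr : 0 < r) (hdvd : r ∣ n) (v : Fin n) :
    (SimpleGraph.turanGraph n r).degree v = n - n / r := by
  classical
  rw [SimpleGraph.degree, SimpleGraph.neighborFinset_eq_filter]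
  have h := Finset.card_filter_add_card_filter_not
      (s := (Finset.univ : Finset (Fin n)))
      (p := fun w : Fin n => (w : ℕ) % r = (v : ℕ) % r)
  rw [resCount hr hdvd (Nat.mod_lt _ hr)] at h
  have he : (Finset.univ.filter fun w : Fin n => ¬((w : ℕ) % r = (v : ℕ) % r)) =
      Finset.univ.filter (fun w => (SimpleGraph.turanGraph n r).Adj v w) := by
    apply Finset.filter_congr
    intro w _
    constructor
    · intro hne; exact fun hE => hne hE.symm
    · intro hadj hE; exact hadj hE.symm
  rw [he] at h
  have hcard : (Finset.univ : Finset (Fin n)).card = n := by simp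
  omega

theorem stmt4 {n r : ℕ} (hr : 0 < r) (hdvd : r ∣ n) (G : SimpleGraph (Fin n))
    (hnc : G ≠ ⊤) (hfree : G.CliqueFree (r + 1))
    (hα : algConn G = (n : ℝ) - ((n / r : ℕ) : ℝ)) :
    Nonempty (G ≃g SimpleGraph.turanGraph n r) := by
  classical
  letI instE : DecidableEq (Fin n) := Classical.decEq (Fin n)
  letI instR : DecidableRel G.Adj := Classical.decRel G.Adj
  -- n ≥ 2, since otherwise every graph on Fin n is complete
  have hn2 : 2 ≤ n := by
    by_contra hlt
    push_neg at hlt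
    apply hnc
    ext u w
    interval_cases n
    · exact u.elim0
    · have huw : u = w := Subsingleton.elim u w
      subst huw
      simp
  have hn0 : 0 < n := by omega
  set k := n / r with hkdef
  have hk1 : 1 ≤ k := (Nat.one_le_div_iff hr).mpr (Nat.le_of_dvd hn0 hdvd)
  have hkn : k ≤ n := Nat.div_le_self n r
  have hnR : (0:ℝ) < n := by exact_mod_cast hn0
  have hnR1 : (1:ℝ) < n := by exact_mod_cast hn2
  have h1n : (0:ℝ) < 1 - 1/n := by
    have : (1:ℝ)/n < 1 := by rw [div_lt_one hnR]; exact hnR1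
    linarith
  -- key: each vertex has degree at least n - k
  have hdeg : ∀ v : Fin n, n - k ≤ G.degree v := by
    intro v
    set x : Fin n → ℝ := (Pi.single v (1:ℝ)) - (fun _ => 1/(n:ℝ)) with hxdef
    have hx0 : x ≠ 0 := by
      intro h
      have hv := congrFun h v
      simp only [hxdef, Pi.sub_apply, Pi.single_eq_same, Pi.zero_apply] at hv
      have : (1:ℝ)/n < 1 := by rw [div_lt_one hnR]; exact hnR1
      linarith
    have hsum : ∑ u, x u = 0 := by
      simp only [hxdef, Pi.sub_apply, Finset.sum_sub_distrib]
      rw [Finset.sum_const, Finset.card_univ, Fintype.card_fin, nsmul_eq_mul]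
      rw [Finset.sum_pi_single']
      simp only [Finset.mem_univ, if_true]
      field_simp
      simp
    -- numerator
    have hLx : (G.lapMatrix ℝ) *ᵥ x = fun u => (G.lapMatrix ℝ) u v := by
      have hx : x = Pi.single v (1:ℝ) + (-(1/(n:ℝ))) • (fun _ : Fin n => (1:ℝ)) := by
        funext u
        simp only [hxdef, Pi.sub_apply, Pi.add_apply, Pi.smul_apply, smul_eq_mul]
        ring
      rw [hx, mulVec_add, mulVec_smul, lapMatrix_mulVec_const_eq_zero, smul_zero, add_zero,
        mulVec_single]
      funext u
      simp
    have hcol : ∀ u : Fin n, (G.lapMatrix ℝ) u v = (G.lapMatrix ℝ) v u := by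
      intro u
      exact (isSymm_lapMatrix (R := ℝ) G).apply v u
    have hrowsum : ∑ u : Fin n, (G.lapMatrix ℝ) v u = 0 := by
      have h0 := congrFun (lapMatrix_mulVec_const_eq_zero (R := ℝ) G) v
      simpa [mulVec, dotProduct] using h0
    have hnum : x ⬝ᵥ ((G.lapMatrix ℝ) *ᵥ x) = G.degree v := by
      rw [hLx, hxdef, sub_dotProduct, single_dotProduct, one_mul]
      have hc : (fun _ : Fin n => (1/n : ℝ)) ⬝ᵥ (fun u => (G.lapMatrix ℝ) u v) = 0 := by
        simp only [dotProduct]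
        simp_rw [hcol]
        rw [← Finset.mul_sum, hrowsum, mul_zero]
      rw [hc, sub_zero]
      simp [lapMatrix, degMatrix, Matrix.sub_apply, Matrix.diagonal_apply_eq]
    have hden : x ⬝ᵥ x = 1 - 1/(n:ℝ) := by
      simp only [dotProduct]
      have hterm : ∀ u : Fin n, x u * x u =
          (if u = v then (1:ℝ) else 0) * (1 - 2/n) + 1/n^2 := by
        intro u
        by_cases h : u = v <;>
          simp [hxdef, Pi.single_apply, h] <;> ring
      rw [Finset.sum_congr rfl (fun u _ => hterm u)]
      rw [Finset.sum_add_distrib, ← Finset.sum_mul, Finset.sum_ite_eq' Finset.univ v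
        (fun _ => (1:ℝ))]
      rw [Finset.sum_const, Finset.card_univ, Fintype.card_fin, nsmul_eq_mul]
      simp only [Finset.mem_univ, if_true]
      field_simp
      ring
    -- Rayleigh bound
    have hle : algConn G ≤ (G.degree v : ℝ) / (1 - 1/n) := by
      unfold algConn
      apply csInf_le
      · refine ⟨0, ?_⟩
        rintro a ⟨y, hy0, -, rfl⟩
        apply div_nonneg
        · have := (posSemidef_lapMatrix (R := ℝ) G).dotProduct_mulVec_nonneg y
          simpa using this
        · simp only [dotProduct]
          exact Finset.sum_nonneg fun i _ => mul_self_nonneg _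
      · refine ⟨x, hx0, hsum, ?_⟩
        rw [hnum, hden]
    rw [hα] at hle
    have hkR : (1:ℝ) ≤ (k:ℝ) := by exact_mod_cast hk1
    have hknR : (k:ℝ) ≤ (n:ℝ) := by exact_mod_cast hkn
    have hmul : ((n:ℝ) - k) * (1 - 1/n) ≤ (G.degree v : ℝ) :=
      (le_div_iff₀ h1n).mp hle
    have hlt : ((n:ℝ) - k) - 1 < (G.degree v : ℝ) := by
      have hq : ((n:ℝ) - k) / n < 1 := by
        rw [div_lt_one hnR]; linarith
      have hexp : ((n:ℝ) - k) * (1 - 1/n) = ((n:ℝ) - k) - ((n:ℝ) - k)/n := by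
        field_simp
      rw [hexp] at hmul
      linarith
    have hcast : ((n - k : ℕ) : ℝ) = (n:ℝ) - k := by
      rw [Nat.cast_sub hkn]
    have : (n - k : ℕ) < G.degree v + 1 := by
      have : ((n - k : ℕ) : ℝ) < (G.degree v : ℝ) + 1 := by rw [hcast]; linarith
      exact_mod_cast this
    omega
  -- edge count comparison
  have hsum2 : n * (n - k) ≤ ∑ v : Fin n, G.degree v := by
    have := Finset.card_nsmul_le_sum Finset.univ (fun v : Fin n => G.degree v) (n - k)
      (fun v _ => hdeg v)
    simpa [Finset.card_univ, smul_eq_mul] using this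
  have hturan_sum : ∑ v : Fin n, (SimpleGraph.turanGraph n r).degree v = n * (n - k) := by
    simp [turanDeg hr hdvd, hkdef]
  have hcard : (SimpleGraph.turanGraph n r).edgeFinset.card ≤ G.edgeFinset.card := by
    have h1 := SimpleGraph.sum_degrees_eq_twice_card_edges (SimpleGraph.turanGraph n r)
    have h2 := SimpleGraph.sum_degrees_eq_twice_card_edges G
    omega
  have itm : G.IsTuranMaximal r :=
    ⟨hfree, fun H _ hH => le_trans ((isTuranMaximal_turanGraph hr).2 hH) hcard⟩
  have hiso := itm.nonempty_iso_turanGraph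
  rw [Fintype.card_fin] at hiso
  exact hiso
end

section
/- Let G be a non-complete simple graph on n vertices with clique number r (the size of a largest clique). Then r ≥ n/(n - α(G)), where α(G) is the algebraic connectivity of G. -/
open SimpleGraph Matrix BigOperators

lemma clique_filter_card_aux {n r : ℕ} (G : SimpleGraph (Fin n))
    (K : Finset (Fin n)) (hK : G.IsNClique r K) (hclique : G.cliqueNum = r)
    {j : Fin n} (hj : j ∉ K) [DecidablePred (fun i => G.Adj i j)] :
    (K.filter (fun i => G.Adj i j)).card + 1 ≤ r := by
  classical
  by_contra h
  push_neg at h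
  have hsub : K.filter (fun i => G.Adj i j) ⊆ K := Finset.filter_subset _ _
  have hcard : (K.filter (fun i => G.Adj i j)).card ≤ r := hK.2 ▸ Finset.card_le_card hsub
  have heq : (K.filter (fun i => G.Adj i j)).card = r := by omega
  have hF : K.filter (fun i => G.Adj i j) = K :=
    Finset.eq_of_subset_of_card_le hsub (by rw [heq, hK.2])
  have hadj : ∀ i ∈ K, G.Adj i j := by
    intro i hi
    have : i ∈ K.filter (fun i => G.Adj i j) := by rw [hF]; exact hi
    exact (Finset.mem_filter.mp this).2
  have hins : G.IsNClique (r + 1) (insert j K) :=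
    hK.insert (fun b hb => (hadj b hb).symm)
  have : r + 1 ≤ G.cliqueNum := by
    have := hins.1.card_le_cliqueNum (G := G)
    rwa [hins.2] at this
  omega

theorem stmt5 {n r : ℕ} (G : SimpleGraph (Fin n)) (hnc : G ≠ ⊤)
    (hclique : G.cliqueNum = r) :
    (n : ℝ) / ((n : ℝ) - algConn G) ≤ (r : ℝ) := by
  letI := Classical.decEq (Fin n)
  letI := Classical.decRel G.Adj
  obtain ⟨K, hK⟩ := G.exists_isNClique_cliqueNum
  rw [hclique] at hK
  have hKcard : K.card = r := hK.2
  -- r < n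
  have hrn : r < n := by
    rcases lt_or_ge r n with h | h
    · exact h
    · exfalso
      apply hnc
      have hcardn : K.card = n := le_antisymm (by simpa using Finset.card_le_univ K)
        (by omega)
      have hKuniv : K = Finset.univ := Finset.eq_univ_of_card K (by simpa using hcardn)
      ext a b
      simp only [top_adj]
      constructor
      · exact fun h' => h'.ne
      · intro hab
        exact hK.1 (by simp [hKuniv]) (by simp [hKuniv]) hab
  have hn : 0 < n := lt_of_le_of_lt (Nat.zero_le r) hrn
  have hr1 : 1 ≤ r := by
    have hc : G.IsClique (({⟨0, hn⟩} : Finset (Fin n)) : Set (Fin n)) := by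
      simp [Set.pairwise_singleton]
    have := hc.card_le_cliqueNum (G := G)
    simpa [hclique] using this
  have hnR : (0:ℝ) < n := by exact_mod_cast hn
  have hrR : (1:ℝ) ≤ r := by exact_mod_cast hr1
  have hrnR : (r:ℝ) < n := by exact_mod_cast hrn
  set c : ℝ := r / n with hc
  set x : Fin n → ℝ := fun v => (if v ∈ K then (1:ℝ) else 0) - c with hxdef
  have hchi_sum : ∑ v, (if v ∈ K then (1:ℝ) else 0) = r := by
    rw [Finset.sum_boole]
    simp [Finset.filter_mem_eq_inter, hKcard]
  -- sum of x is zero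
  have hxsum : ∑ v, x v = 0 := by
    simp only [hxdef, Finset.sum_sub_distrib, hchi_sum, Finset.sum_const,
      Finset.card_univ, Fintype.card_fin, nsmul_eq_mul, hc]
    field_simp
    ring
  -- x is nonzero
  obtain ⟨j₀, hj₀⟩ : ∃ j, j ∉ K := by
    by_contra h
    push_neg at h
    have : K = Finset.univ := Finset.eq_univ_iff_forall.mpr h
    rw [this] at hKcard
    simp at hKcard
    omega
  have hcpos : 0 < c := by rw [hc]; apply div_pos (by linarith) hnR
  have hxne : x ≠ 0 := by
    intro h
    have h0 := congrFun h j₀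
    simp only [hxdef, Pi.zero_apply] at h0
    rw [if_neg hj₀] at h0
    linarith
  -- denominator
  have hden : x ⬝ᵥ x = r * (n - r) / n := by
    rw [dotProduct]
    have key : ∀ v, x v * x v = (if v ∈ K then (1:ℝ) else 0) * (1 - 2*c) + c^2 := by
      intro v
      simp only [hxdef]
      split <;> ring
    simp_rw [key]
    rw [Finset.sum_add_distrib, ← Finset.sum_mul, hchi_sum]
    simp only [Finset.sum_const, Finset.card_univ, Fintype.card_fin, nsmul_eq_mul, hc]
    field_simp
    ring
  -- numerator bound
  have hnum : x ⬝ᵥ (G.lapMatrix ℝ).mulVec x ≤ (n - r) * (r - 1) := by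
    rw [← Matrix.toLinearMap₂'_apply', lapMatrix_toLinearMap₂']
    have hdiff : ∀ i j : Fin n, x i - x j =
        (if i ∈ K then (1:ℝ) else 0) - (if j ∈ K then (1:ℝ) else 0) := by
      intro i j; simp only [hxdef]; ring
    have step1 : ∀ i j : Fin n, (if G.Adj i j then (x i - x j)^2 else 0) ≤
        (if i ∈ K ∧ j ∉ K ∧ G.Adj i j then (1:ℝ) else 0) +
        (if j ∈ K ∧ i ∉ K ∧ G.Adj i j then (1:ℝ) else 0) := by
      intro i j
      rw [hdiff]
      by_cases hadj : G.Adj i j <;> by_cases hi : i ∈ K <;> by_cases hj : j ∈ K <;>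
        simp [hadj, hi, hj] <;> norm_num
    have sum_le : (∑ i : Fin n, ∑ j : Fin n, if G.Adj i j then (x i - x j)^2 else 0) ≤
        (∑ i : Fin n, ∑ j : Fin n, ((if i ∈ K ∧ j ∉ K ∧ G.Adj i j then (1:ℝ) else 0) +
          (if j ∈ K ∧ i ∉ K ∧ G.Adj i j then (1:ℝ) else 0))) := by
      apply Finset.sum_le_sum
      intro i _
      apply Finset.sum_le_sum
      intro j _
      exact step1 i j
    have hsplit : (∑ i : Fin n, ∑ j : Fin n, ((if i ∈ K ∧ j ∉ K ∧ G.Adj i j then (1:ℝ) else 0) +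
          (if j ∈ K ∧ i ∉ K ∧ G.Adj i j then (1:ℝ) else 0))) =
        2 * (∑ j : Fin n, ∑ i : Fin n, (if i ∈ K ∧ j ∉ K ∧ G.Adj i j then (1:ℝ) else 0)) := by
      simp_rw [Finset.sum_add_distrib]
      rw [Finset.sum_comm (f := fun i j => (if i ∈ K ∧ j ∉ K ∧ G.Adj i j then (1:ℝ) else 0))]
      have : (∑ i : Fin n, ∑ j : Fin n, (if j ∈ K ∧ i ∉ K ∧ G.Adj i j then (1:ℝ) else 0)) =
          (∑ j : Fin n, ∑ i : Fin n, (if i ∈ K ∧ j ∉ K ∧ G.Adj i j then (1:ℝ) else 0)) := by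
        apply Finset.sum_congr rfl
        intro i _
        apply Finset.sum_congr rfl
        intro j _
        congr 1
        simp only [eq_iff_iff]
        constructor
        · rintro ⟨h1, h2, h3⟩; exact ⟨h1, h2, h3.symm⟩
        · rintro ⟨h1, h2, h3⟩; exact ⟨h1, h2, h3.symm⟩
      rw [this]
      ring
    have hinner : ∀ j : Fin n, (∑ i : Fin n, (if i ∈ K ∧ j ∉ K ∧ G.Adj i j then (1:ℝ) else 0)) ≤
        (if j ∈ K then 0 else (r:ℝ) - 1) := by
      intro j
      by_cases hj : j ∈ K
      · simp [hj]
      · simp only [hj, if_false, not_false_iff, true_and]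
        have : (∑ i : Fin n, (if i ∈ K ∧ G.Adj i j then (1:ℝ) else 0)) =
            ((Finset.univ.filter (fun i => i ∈ K ∧ G.Adj i j)).card : ℝ) := by
          rw [Finset.sum_boole]
        have heqf : Finset.univ.filter (fun i => i ∈ K ∧ G.Adj i j) =
            K.filter (fun i => G.Adj i j) := by
          ext i
          simp [Finset.mem_filter]
        have hcount := clique_filter_card_aux G K hK hclique hj
        calc (∑ i : Fin n, (if i ∈ K ∧ G.Adj i j then (1:ℝ) else 0))
            = ((K.filter (fun i => G.Adj i j)).card : ℝ) := by rw [this, heqf]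
          _ ≤ (r:ℝ) - 1 := by
              have : ((K.filter (fun i => G.Adj i j)).card : ℝ) + 1 ≤ r := by
                exact_mod_cast hcount
              linarith
    have houter : (∑ j : Fin n, (if j ∈ K then (0:ℝ) else (r:ℝ) - 1)) =
        ((n:ℝ) - r) * ((r:ℝ) - 1) := by
      rw [Finset.sum_ite]
      simp only [Finset.sum_const, smul_zero, nsmul_eq_mul, zero_add]
      have : (Finset.univ.filter (fun j => j ∉ K)).card = n - r := by
        rw [Finset.filter_not, Finset.card_sdiff_of_subset (by simp)]
        simp [hKcard]
      rw [this]
      have : ((n - r : ℕ) : ℝ) = (n:ℝ) - r := by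
        push_cast [Nat.cast_sub (le_of_lt hrn)]
        ring
      rw [this]
    calc (∑ i : Fin n, ∑ j : Fin n, if G.Adj i j then (x i - x j)^2 else 0) / 2
        ≤ (2 * (∑ j : Fin n, ∑ i : Fin n,
            (if i ∈ K ∧ j ∉ K ∧ G.Adj i j then (1:ℝ) else 0))) / 2 := by
          apply div_le_div_of_nonneg_right ?_ (by norm_num)
          · rw [← hsplit]; exact sum_le
      _ = ∑ j : Fin n, ∑ i : Fin n, (if i ∈ K ∧ j ∉ K ∧ G.Adj i j then (1:ℝ) else 0) := by
          ring
      _ ≤ ∑ j : Fin n, (if j ∈ K then 0 else (r:ℝ) - 1) :=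
          Finset.sum_le_sum (fun j _ => hinner j)
      _ = ((n:ℝ) - r) * ((r:ℝ) - 1) := houter
  -- the Rayleigh quotient bound
  have hdenpos : 0 < x ⬝ᵥ x := by
    rw [hden]
    apply div_pos _ hnR
    nlinarith
  have hBdd : BddBelow { a : ℝ | ∃ y : Fin n → ℝ, y ≠ 0 ∧ ∑ v, y v = 0 ∧
      a = (y ⬝ᵥ (G.lapMatrix ℝ).mulVec y) / (y ⬝ᵥ y) } := by
    refine ⟨0, ?_⟩
    rintro a ⟨y, hy0, hysum, rfl⟩
    apply div_nonneg
    · rw [← Matrix.toLinearMap₂'_apply', lapMatrix_toLinearMap₂']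
      positivity
    · rw [dotProduct]
      exact Finset.sum_nonneg fun v _ => mul_self_nonneg _
  have hmem : (x ⬝ᵥ (G.lapMatrix ℝ).mulVec x) / (x ⬝ᵥ x) ∈
      { a : ℝ | ∃ y : Fin n → ℝ, y ≠ 0 ∧ ∑ v, y v = 0 ∧
        a = (y ⬝ᵥ (G.lapMatrix ℝ).mulVec y) / (y ⬝ᵥ y) } :=
    ⟨x, hxne, hxsum, rfl⟩
  have halg : algConn G ≤ (x ⬝ᵥ (G.lapMatrix ℝ).mulVec x) / (x ⬝ᵥ x) :=
    csInf_le hBdd hmem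
  have hquot : (x ⬝ᵥ (G.lapMatrix ℝ).mulVec x) / (x ⬝ᵥ x) ≤ (n:ℝ) * ((r:ℝ) - 1) / r := by
    rw [hden]
    rw [div_le_div_iff₀ (by nlinarith) (by linarith : (0:ℝ) < r)]
    have hrw : (n:ℝ) * ((r:ℝ) - 1) * ((r:ℝ) * ((n:ℝ) - (r:ℝ)) / (n:ℝ)) =
        ((n:ℝ) - r) * ((r:ℝ) - 1) * r := by field_simp
    rw [hrw]
    nlinarith [mul_le_mul_of_nonneg_right hnum (by linarith : (0:ℝ) ≤ r)]
  have hα : algConn G ≤ (n:ℝ) * ((r:ℝ) - 1) / r := le_trans halg hquot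
  have hpos : 0 < (n:ℝ) - algConn G := by
    have : (n:ℝ) * ((r:ℝ) - 1) / r < n := by
      rw [div_lt_iff₀ (by linarith)]
      nlinarith
    linarith
  rw [div_le_iff₀ hpos]
  have hmul : (r:ℝ) * algConn G ≤ (r:ℝ) * ((n:ℝ) * ((r:ℝ) - 1) / r) :=
    mul_le_mul_of_nonneg_left hα (by linarith)
  have : (r:ℝ) * ((n:ℝ) * ((r:ℝ) - 1) / r) = (n:ℝ) * ((r:ℝ) - 1) := by
    field_simp
  rw [this] at hmul
  nlinarith
end

section
/- Let n = kr + t with 0 < t < r - 1, let H₁, …, H_t be edgeless graphs each on k+1 vertices, and let H be a graph on n - (k+1)t vertices with no clique of size r+1-t and with algebraic connectivity α(H) ≥ n - (k+1)(t+1). Then the join G = H₁ ∨ H₂ ∨ ⋯ ∨ H_t ∨ H satisfies α(G) = n - (k+1) = n - ⌈n/r⌉. -/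
open SimpleGraph Matrix BigOperators

/-- The join `H₁ ∨ ⋯ ∨ H_t ∨ H` where `H₁, …, H_t` are edgeless graphs on `k+1`
vertices each: vertex `(i, a)` lies in part `Hᵢ`, and all edges between distinct
parts (and between any part and `H`) are present. -/
def joinGraph {β : Type*} (t k : ℕ) (H : SimpleGraph β) :
    SimpleGraph ((Fin t × Fin (k + 1)) ⊕ β) :=
  SimpleGraph.fromRel (fun x y =>
    match x, y with
    | .inl a, .inl b => a.1 ≠ b.1
    | .inl _, .inr _ => True
    | .inr a, .inr b => H.Adj a b
    | _, _ => False)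

section aux
variable {V : Type*} [Fintype V]

noncomputable def qsum (G : SimpleGraph V) [DecidableRel G.Adj] (x : V → ℝ) : ℝ :=
  ∑ i, ∑ j, if G.Adj i j then (x i - x j)^2 else 0

lemma dot_lap_eq (G : SimpleGraph V) [DecidableEq V] [DecidableRel G.Adj] (x : V → ℝ) :
    x ⬝ᵥ (G.lapMatrix ℝ).mulVec x = qsum G x / 2 := by
  rw [← Matrix.toLinearMap₂'_apply', lapMatrix_toLinearMap₂', qsum]

lemma qsum_irrel (G : SimpleGraph V) (i1 i2 : DecidableRel G.Adj) (x : V → ℝ) :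
    @qsum V _ G i1 x = @qsum V _ G i2 x := by
  unfold qsum
  congr!

lemma qsum_nonneg (G : SimpleGraph V) [DecidableRel G.Adj] (x : V → ℝ) :
    0 ≤ qsum G x := by
  unfold qsum
  refine Finset.sum_nonneg fun i _ => Finset.sum_nonneg fun j _ => ?_
  split <;> positivity

lemma sumsq (x : V → ℝ) :
    ∑ i, ∑ j, (x i - x j)^2
      = 2*(Fintype.card V)*(∑ v, (x v)^2) - 2*(∑ v, x v)^2 := by
  have h1 : ∀ i : V, ∑ j, (x i - x j)^2
      = (Fintype.card V : ℝ) * (x i)^2 - 2 * x i * (∑ j, x j) + ∑ j, (x j)^2 := by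
    intro i
    rw [Finset.sum_congr rfl (fun j _ =>
      show (x i - x j)^2 = (x i)^2 - 2 * x i * x j + (x j)^2 by ring)]
    rw [Finset.sum_add_distrib, Finset.sum_sub_distrib, ← Finset.mul_sum, Finset.sum_const,
      Finset.card_univ, nsmul_eq_mul]
  rw [Finset.sum_congr rfl fun i _ => h1 i]
  rw [Finset.sum_add_distrib, Finset.sum_sub_distrib, ← Finset.mul_sum, ← Finset.sum_mul,
    ← Finset.mul_sum, Finset.sum_const, Finset.card_univ, nsmul_eq_mul]
  ring

lemma offdiag_sumsq [DecidableEq V] (x : V → ℝ) :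
    ∑ i, ∑ j, (if i ≠ j then (x i - x j)^2 else 0)
      = 2*(Fintype.card V)*(∑ v, (x v)^2) - 2*(∑ v, x v)^2 := by
  rw [← sumsq]
  refine Finset.sum_congr rfl fun i _ => Finset.sum_congr rfl fun j _ => ?_
  split_ifs with h
  · rfl
  · rw [not_not.mp h, sub_self]; ring

lemma qsum_add_compl (G : SimpleGraph V) [DecidableEq V] [DecidableRel G.Adj]
    [DecidableRel Gᶜ.Adj] (x : V → ℝ) :
    qsum G x + qsum Gᶜ x
      = 2*(Fintype.card V)*(∑ v, (x v)^2) - 2*(∑ v, x v)^2 := by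
  rw [← offdiag_sumsq]
  unfold qsum
  rw [← Finset.sum_add_distrib]
  refine Finset.sum_congr rfl fun i _ => ?_
  rw [← Finset.sum_add_distrib]
  refine Finset.sum_congr rfl fun j _ => ?_
  by_cases hij : i = j
  · subst hij; simp
  · by_cases ha : G.Adj i j
    · rw [if_pos ha, if_neg (by simp [compl_adj, ha]), if_pos hij, add_zero]
    · rw [if_neg ha, if_pos (by simp [compl_adj, hij, ha]), if_pos hij, zero_add]

lemma qsum_shift (G : SimpleGraph V) [DecidableRel G.Adj] (x : V → ℝ) (c : ℝ) :
    qsum G (fun v => x v - c) = qsum G x := by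
  unfold qsum
  refine Finset.sum_congr rfl fun i _ => Finset.sum_congr rfl fun j _ => ?_
  congr 1
  ring

lemma algConn_bddBelow (G : SimpleGraph V) :
    letI := Classical.decEq V
    letI := Classical.decRel G.Adj
    BddBelow { a : ℝ | ∃ x : V → ℝ, x ≠ 0 ∧ ∑ v, x v = 0 ∧
      a = (x ⬝ᵥ (G.lapMatrix ℝ).mulVec x) / (x ⬝ᵥ x) } := by
  letI := Classical.decEq V
  letI := Classical.decRel G.Adj
  refine ⟨0, fun a ha => ?_⟩
  obtain ⟨x, -, -, rfl⟩ := ha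
  rw [dot_lap_eq]
  refine div_nonneg (by linarith [qsum_nonneg G x]) ?_
  rw [dotProduct]
  exact Finset.sum_nonneg fun v _ => mul_self_nonneg _

lemma rayleigh_lb (G : SimpleGraph V) [inst : DecidableRel G.Adj] (c : ℝ) (hc : c ≤ algConn G)
    (z : V → ℝ) (hz : ∑ v, z v = 0) :
    2*c*(∑ v, (z v)^2) ≤ qsum G z := by
  rcases eq_or_ne z 0 with rfl | hz0
  · simp [qsum_nonneg]
  · have hle : algConn G ≤ qsum G z / 2 / (z ⬝ᵥ z) := by
      letI dE := Classical.decEq V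
      letI dR := Classical.decRel G.Adj
      have hle0 : algConn G ≤ (z ⬝ᵥ (G.lapMatrix ℝ).mulVec z) / (z ⬝ᵥ z) := by
        unfold algConn
        exact csInf_le (algConn_bddBelow G) ⟨z, hz0, hz, rfl⟩
      rw [dot_lap_eq, qsum_irrel G dR inst z] at hle0
      exact hle0
    have hD : (0:ℝ) < z ⬝ᵥ z := by
      obtain ⟨v, hv⟩ := Function.ne_iff.mp hz0
      rw [dotProduct]
      refine Finset.sum_pos' (fun w _ => mul_self_nonneg _) ⟨v, Finset.mem_univ v, ?_⟩
      exact mul_self_pos.mpr hv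
    have hcq : c ≤ qsum G z / 2 / (z ⬝ᵥ z) := le_trans hc hle
    rw [le_div_iff₀ hD] at hcq
    have hDD : z ⬝ᵥ z = ∑ v, (z v)^2 := by
      rw [dotProduct]; exact Finset.sum_congr rfl fun v _ => (sq (z v)).symm
    rw [hDD] at hcq
    linarith

lemma compl_qsum_le (G : SimpleGraph V) [DecidableEq V] [DecidableRel G.Adj]
    [DecidableRel Gᶜ.Adj]
    (c K : ℝ) (hc : c ≤ algConn G) (hK : (Fintype.card V : ℝ) - c ≤ K) (hK0 : 0 ≤ K)
    (hcard : 0 < Fintype.card V) (x : V → ℝ) :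
    qsum Gᶜ x ≤ 2*K*(∑ v, (x v)^2) := by
  set m : ℝ := (Fintype.card V : ℝ) with hm
  have hm0 : m ≠ 0 := by
    simp only [hm, ne_eq, Nat.cast_eq_zero]
    omega
  set cc : ℝ := (∑ v, x v) / m with hcc
  set z : V → ℝ := fun v => x v - cc with hzdef
  have hsz : ∑ v, z v = 0 := by
    simp only [hzdef, Finset.sum_sub_distrib, Finset.sum_const, Finset.card_univ, nsmul_eq_mul,
      hcc, ← hm]
    field_simp
    ring
  have hzx : ∑ v, (z v)^2 ≤ ∑ v, (x v)^2 := by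
    have hexp : ∑ v, (z v)^2 = ∑ v, (x v)^2 - 2*cc*(∑ v, x v) + m*cc^2 := by
      have : ∀ v, (z v)^2 = (x v)^2 - 2*cc*(x v) + cc^2 := fun v => by
        simp only [hzdef]; ring
      simp_rw [this, Finset.sum_add_distrib, Finset.sum_sub_distrib, ← Finset.mul_sum,
        Finset.sum_const, Finset.card_univ, nsmul_eq_mul]
      rfl
    have hsx : ∑ v, x v = m * cc := by
      rw [hcc]; field_simp
    rw [hexp, hsx]
    have hmpos : 0 < m := by
      simp only [hm, Nat.cast_pos]; exact hcard
    nlinarith [sq_nonneg cc]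
  have h1 : qsum G z + qsum Gᶜ z = 2*m*(∑ v, (z v)^2) := by
    rw [qsum_add_compl, hsz, ← hm]; ring
  have h2 : 2*c*(∑ v, (z v)^2) ≤ qsum G z := rayleigh_lb G c hc z hsz
  have h3 : qsum Gᶜ x = qsum Gᶜ z := (qsum_shift Gᶜ x cc).symm
  have hz2 : (0:ℝ) ≤ ∑ v, (z v)^2 := Finset.sum_nonneg fun v _ => sq_nonneg _
  have hx2 : (0:ℝ) ≤ ∑ v, (x v)^2 := Finset.sum_nonneg fun v _ => sq_nonneg _
  calc qsum Gᶜ x = qsum Gᶜ z := h3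
    _ ≤ 2*(m - c)*(∑ v, (z v)^2) := by linarith
    _ ≤ 2*K*(∑ v, (z v)^2) := by nlinarith
    _ ≤ 2*K*(∑ v, (x v)^2) := by nlinarith

end aux

section join
variable {β : Type*} (t k : ℕ) (H : SimpleGraph β)

lemma jca_ll (p q : Fin t × Fin (k+1)) :
    (joinGraph t k H)ᶜ.Adj (Sum.inl p) (Sum.inl q) ↔ p.1 = q.1 ∧ p.2 ≠ q.2 := by
  simp [joinGraph, compl_adj, fromRel_adj, Prod.ext_iff]
  tauto

lemma jca_lr (p : Fin t × Fin (k+1)) (b : β) :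
    ¬ (joinGraph t k H)ᶜ.Adj (Sum.inl p) (Sum.inr b) := by
  simp [joinGraph, compl_adj, fromRel_adj]

lemma jca_rl (p : Fin t × Fin (k+1)) (b : β) :
    ¬ (joinGraph t k H)ᶜ.Adj (Sum.inr b) (Sum.inl p) := by
  simp [joinGraph, compl_adj, fromRel_adj]

lemma jca_rr (a b : β) :
    (joinGraph t k H)ᶜ.Adj (Sum.inr a) (Sum.inr b) ↔ Hᶜ.Adj a b := by
  simp [joinGraph, compl_adj, fromRel_adj]
  tauto

lemma join_decomp [Fintype β] [DecidableEq β] [DecidableRel H.Adj]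
    [DecidableRel Hᶜ.Adj] [DecidableRel ((joinGraph t k H)ᶜ.Adj)]
    (x : (Fin t × Fin (k+1)) ⊕ β → ℝ) :
    qsum (joinGraph t k H)ᶜ x
      = (∑ i : Fin t, (2*((k:ℝ)+1)*(∑ a, (x (Sum.inl (i,a)))^2)
          - 2*(∑ a, x (Sum.inl (i,a)))^2))
        + qsum Hᶜ (fun b => x (Sum.inr b)) := by
  unfold qsum
  rw [Fintype.sum_sum_type]
  simp only [Fintype.sum_sum_type]
  have hA : ∀ p : Fin t × Fin (k+1), (∑ b : β,
      if (joinGraph t k H)ᶜ.Adj (Sum.inl p) (Sum.inr b)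
        then (x (Sum.inl p) - x (Sum.inr b))^2 else 0) = 0 :=
    fun p => Finset.sum_eq_zero fun b _ => if_neg (jca_lr t k H p b)
  have hB : ∀ b : β, (∑ q : Fin t × Fin (k+1),
      if (joinGraph t k H)ᶜ.Adj (Sum.inr b) (Sum.inl q)
        then (x (Sum.inr b) - x (Sum.inl q))^2 else 0) = 0 :=
    fun b => Finset.sum_eq_zero fun q _ => if_neg (jca_rl t k H q b)
  have hC : ∀ a b : β, (if (joinGraph t k H)ᶜ.Adj (Sum.inr a) (Sum.inr b)
        then (x (Sum.inr a) - x (Sum.inr b))^2 else 0)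
      = (if Hᶜ.Adj a b then (x (Sum.inr a) - x (Sum.inr b))^2 else 0) :=
    fun a b => if_congr (jca_rr t k H a b) rfl rfl
  simp_rw [hA, hB, hC, add_zero, zero_add]
  congr 1
  rw [Fintype.sum_prod_type]
  simp only [Fintype.sum_prod_type]
  have hcond : ∀ (i j : Fin t) (a b : Fin (k+1)),
      (if (joinGraph t k H)ᶜ.Adj (Sum.inl (i,a)) (Sum.inl (j,b))
        then (x (Sum.inl (i,a)) - x (Sum.inl (j,b)))^2 else 0)
      = if i = j then (if a ≠ b then (x (Sum.inl (i,a)) - x (Sum.inl (j,b)))^2 else 0)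
          else 0 := by
    intro i j a b
    rw [if_congr (jca_ll t k H (i,a) (j,b)) rfl rfl, ite_and]
  simp_rw [hcond]
  refine Finset.sum_congr rfl fun i _ => ?_
  rw [Finset.sum_comm]
  rw [Finset.sum_eq_single i
    (fun j _ hj => Finset.sum_eq_zero fun a _ =>
      Finset.sum_eq_zero fun b _ => if_neg (by exact fun h => hj h.symm))
    (fun h => absurd (Finset.mem_univ i) h)]
  simp only [eq_self_iff_true, if_true]
  have := offdiag_sumsq (fun a => x (Sum.inl (i,a)))
  simp only [Fintype.card_fin] at this
  rw [this]
  push_cast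
  ring

end join

theorem stmt7 {n r k t : ℕ} (hk : 1 ≤ k) (hn : n = k * r + t) (ht0 : 0 < t)
    (ht : t < r - 1) (H : SimpleGraph (Fin (n - (k + 1) * t)))
    (hHfree : H.CliqueFree (r + 1 - t))
    (hHα : (n : ℝ) - ((k : ℝ) + 1) * ((t : ℝ) + 1) ≤ algConn H) :
    algConn (joinGraph t k H) = (n : ℝ) - ((k : ℝ) + 1) := by
  -- basic arithmetic
  have hrt : t + 2 ≤ r := by omega
  have h1r : t < r := by omega
  have hlt : (k + 1) * t < n := by
    have h2 : k * t < k * r := by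
      have := Nat.mul_lt_mul_of_lt_of_le (Nat.lt_succ_self 0) h1r
      nlinarith
    nlinarith
  have hltle : (k + 1) * t ≤ n := le_of_lt hlt
  have hsubpos : 0 < n - (k + 1) * t := Nat.sub_pos_of_lt hlt
  -- vertex type
  set V := (Fin t × Fin (k + 1)) ⊕ Fin (n - (k + 1) * t) with hV
  have hcardV : Fintype.card V = n := by
    show Fintype.card ((Fin t × Fin (k + 1)) ⊕ Fin (n - (k + 1) * t)) = n
    rw [Fintype.card_sum, Fintype.card_prod, Fintype.card_fin, Fintype.card_fin,
      Fintype.card_fin, mul_comm]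
    exact Nat.add_sub_cancel' hltle
  have hcast : ((n - (k + 1) * t : ℕ) : ℝ) = (n : ℝ) - ((k:ℝ) + 1) * (t:ℝ) := by
    rw [Nat.cast_sub hltle]
    push_cast
    ring
  set G := joinGraph t k H with hG
  letI dE : DecidableEq V := Classical.decEq V
  letI dR : DecidableRel G.Adj := Classical.decRel G.Adj
  letI dRc : DecidableRel Gᶜ.Adj := Classical.decRel _
  letI dH : DecidableRel H.Adj := Classical.decRel _
  letI dHc : DecidableRel Hᶜ.Adj := Classical.decRel _
  -- the special vector
  have h01 : (0 : Fin (k+1)) ≠ 1 := by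
    intro h
    have h2 := congrArg Fin.val h
    rw [Fin.val_zero, Fin.val_one', Nat.mod_eq_of_lt (by omega)] at h2
    exact absurd h2 (by omega)
  set i₀ : Fin t := ⟨0, ht0⟩ with hi₀
  set v₀ : V := Sum.inl (i₀, 0) with hv₀
  set v₁ : V := Sum.inl (i₀, 1) with hv₁
  have hne : v₀ ≠ v₁ := by
    rw [hv₀, hv₁]
    intro h
    rw [Sum.inl.injEq, Prod.mk.injEq] at h
    exact h01 h.2
  set x₀ : V → ℝ := fun v => if v = v₀ then 1 else if v = v₁ then -1 else 0 with hx₀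
  have hx0ne : x₀ ≠ 0 := by
    intro h
    have h2 : x₀ v₀ = 0 := by rw [h]; rfl
    have h3 : x₀ v₀ = 1 := if_pos rfl
    rw [h3] at h2
    norm_num at h2
  have hxv : ∀ v, x₀ v = (if v = v₀ then (1:ℝ) else 0) + (if v = v₁ then -1 else 0) := by
    intro v
    by_cases h0 : v = v₀ <;> by_cases h1 : v = v₁
    · exact absurd (h0.symm.trans h1) hne
    · simp [hx₀, h0, h1, hne, Ne.symm hne]
    · simp [hx₀, h0, h1, hne, Ne.symm hne]
    · simp [hx₀, h0, h1, hne, Ne.symm hne]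
  have hxv2 : ∀ v, (x₀ v)^2 = (if v = v₀ then (1:ℝ) else 0) + (if v = v₁ then 1 else 0) := by
    intro v
    by_cases h0 : v = v₀ <;> by_cases h1 : v = v₁
    · exact absurd (h0.symm.trans h1) hne
    · simp [hx₀, h0, h1, hne, Ne.symm hne]
    · simp [hx₀, h0, h1, hne, Ne.symm hne]
    · simp [hx₀, h0, h1, hne, Ne.symm hne]
  have hx0sum : ∑ v, x₀ v = 0 := by
    simp_rw [hxv]
    rw [Finset.sum_add_distrib, Finset.sum_ite_eq' Finset.univ v₀ (fun _ => (1:ℝ)),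
      Finset.sum_ite_eq' Finset.univ v₁ (fun _ => (-1:ℝ))]
    simp
  have hx0sq : ∑ v, (x₀ v)^2 = 2 := by
    simp_rw [hxv2]
    rw [Finset.sum_add_distrib, Finset.sum_ite_eq' Finset.univ v₀ (fun _ => (1:ℝ)),
      Finset.sum_ite_eq' Finset.univ v₁ (fun _ => (1:ℝ))]
    norm_num
  -- bound for the complement quadratic form
  have hHb : ∀ y : Fin (n - (k+1)*t) → ℝ,
      qsum Hᶜ y ≤ 2*((k:ℝ)+1)*(∑ b, (y b)^2) := by
    intro y
    refine compl_qsum_le H ((n:ℝ) - ((k:ℝ)+1)*((t:ℝ)+1)) ((k:ℝ)+1) hHα ?_ (by positivity) ?_ y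
    · rw [Fintype.card_fin, hcast]
      nlinarith
    · rw [Fintype.card_fin]
      exact hsubpos
  have hGcb : ∀ x : V → ℝ, qsum Gᶜ x ≤ 2*((k:ℝ)+1)*(∑ v, (x v)^2) := by
    intro x
    have hdec := join_decomp t k H x
    have hsplit : ∑ v, (x v)^2
        = (∑ i : Fin t, ∑ a, (x (Sum.inl (i,a)))^2) + ∑ b, (x (Sum.inr b))^2 := by
      rw [Fintype.sum_sum_type, Fintype.sum_prod_type]
    rw [hdec, hsplit]
    have hpart : (∑ i : Fin t, (2*((k:ℝ)+1)*(∑ a, (x (Sum.inl (i,a)))^2)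
          - 2*(∑ a, x (Sum.inl (i,a)))^2))
        ≤ ∑ i : Fin t, 2*((k:ℝ)+1)*(∑ a, (x (Sum.inl (i,a)))^2) :=
      Finset.sum_le_sum fun i _ => sub_le_self _ (by positivity)
    have hHy := hHb (fun b => x (Sum.inr b))
    have hmulsum : ∑ i : Fin t, 2*((k:ℝ)+1)*(∑ a, (x (Sum.inl (i,a)))^2)
        = 2*((k:ℝ)+1)*(∑ i : Fin t, ∑ a, (x (Sum.inl (i,a)))^2) := by
      rw [Finset.mul_sum]
    calc (∑ i : Fin t, (2*((k:ℝ)+1)*(∑ a, (x (Sum.inl (i,a)))^2)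
          - 2*(∑ a, x (Sum.inl (i,a)))^2)) + qsum Hᶜ (fun b => x (Sum.inr b))
        ≤ (∑ i : Fin t, 2*((k:ℝ)+1)*(∑ a, (x (Sum.inl (i,a)))^2))
          + 2*((k:ℝ)+1)*(∑ b, (x (Sum.inr b))^2) := add_le_add hpart hHy
      _ = 2*((k:ℝ)+1)*((∑ i : Fin t, ∑ a, (x (Sum.inl (i,a)))^2) + ∑ b, (x (Sum.inr b))^2) := by
          rw [hmulsum]; ring
  -- value of qsum Gᶜ at x₀
  have hx0inr : ∀ b, x₀ (Sum.inr b) = 0 := by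
    intro b
    simp [hx₀, hv₀, hv₁]
  have hGc0 : qsum Gᶜ x₀ = 4*((k:ℝ)+1) := by
    rw [join_decomp t k H x₀]
    have hHz : qsum Hᶜ (fun b => x₀ (Sum.inr b)) = 0 := by
      unfold qsum
      refine Finset.sum_eq_zero fun i _ => Finset.sum_eq_zero fun j _ => ?_
      simp [hx0inr]
    rw [hHz, add_zero]
    rw [Finset.sum_eq_single i₀
      (fun i _ hi => ?_) (fun h => absurd (Finset.mem_univ i₀) h)]
    · have hyv : ∀ a : Fin (k+1), x₀ (Sum.inl (i₀, a))
          = (if a = 0 then (1:ℝ) else 0) + (if a = 1 then -1 else 0) := by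
        intro a
        have e0 : ((Sum.inl (i₀,a) : V) = v₀) ↔ a = 0 := by rw [hv₀]; simp
        have e1 : ((Sum.inl (i₀,a) : V) = v₁) ↔ a = 1 := by rw [hv₁]; simp
        rw [hxv, if_congr e0 rfl rfl, if_congr e1 rfl rfl]
      have hyv2 : ∀ a : Fin (k+1), (x₀ (Sum.inl (i₀, a)))^2
          = (if a = 0 then (1:ℝ) else 0) + (if a = 1 then 1 else 0) := by
        intro a
        have e0 : ((Sum.inl (i₀,a) : V) = v₀) ↔ a = 0 := by rw [hv₀]; simp
        have e1 : ((Sum.inl (i₀,a) : V) = v₁) ↔ a = 1 := by rw [hv₁]; simp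
        rw [hxv2, if_congr e0 rfl rfl, if_congr e1 rfl rfl]
      have hs1 : ∑ a : Fin (k+1), x₀ (Sum.inl (i₀, a)) = 0 := by
        simp_rw [hyv]
        rw [Finset.sum_add_distrib, Finset.sum_ite_eq' Finset.univ (0 : Fin (k+1)) (fun _ => (1:ℝ)),
          Finset.sum_ite_eq' Finset.univ (1 : Fin (k+1)) (fun _ => (-1:ℝ))]
        simp
      have hs2 : ∑ a : Fin (k+1), (x₀ (Sum.inl (i₀, a)))^2 = 2 := by
        simp_rw [hyv2]
        rw [Finset.sum_add_distrib, Finset.sum_ite_eq' Finset.univ (0 : Fin (k+1)) (fun _ => (1:ℝ)),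
          Finset.sum_ite_eq' Finset.univ (1 : Fin (k+1)) (fun _ => (1:ℝ))]
        norm_num
      rw [hs1, hs2]
      ring
    · have hz : ∀ a : Fin (k+1), x₀ (Sum.inl (i, a)) = 0 := by
        intro a
        have e0 : (Sum.inl (i,a) : V) ≠ v₀ := by
          rw [hv₀]
          simp only [ne_eq, Sum.inl.injEq, Prod.mk.injEq, not_and]
          exact fun h _ => hi h
        have e1 : (Sum.inl (i,a) : V) ≠ v₁ := by
          rw [hv₁]
          simp only [ne_eq, Sum.inl.injEq, Prod.mk.injEq, not_and]
          exact fun h _ => hi h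
        rw [hx₀]
        simp only [if_neg e0, if_neg e1]
      simp [hz]
  -- orthogonality-type rewriting for the dot product
  have hdot : ∀ x : V → ℝ, x ⬝ᵥ x = ∑ v, (x v)^2 := by
    intro x
    rw [dotProduct]
    exact Finset.sum_congr rfl fun v _ => (sq (x v)).symm
  have hcardR : (Fintype.card V : ℝ) = (n : ℝ) := by rw [hcardV]
  -- main computation
  unfold algConn
  refine IsLeast.csInf_eq ⟨⟨x₀, hx0ne, hx0sum, ?_⟩, ?_⟩
  · -- the value is attained at x₀
    rw [dot_lap_eq, hdot, hx0sq]
    have hqc := qsum_add_compl G x₀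
    rw [hx0sum, hx0sq, hGc0, hcardR] at hqc
    have hq : qsum G x₀ = 4*(n:ℝ) - 4*((k:ℝ)+1) := by linarith
    rw [qsum_irrel G _ dR x₀, hq]
    ring
  · -- lower bound
    rintro a ⟨x, hx0, hxs, rfl⟩
    rw [dot_lap_eq, hdot]
    have hS2 : (0:ℝ) < ∑ v, (x v)^2 := by
      obtain ⟨v, hv⟩ := Function.ne_iff.mp hx0
      refine Finset.sum_pos' (fun w _ => sq_nonneg _) ⟨v, Finset.mem_univ v, ?_⟩
      exact lt_of_le_of_ne (sq_nonneg _) (Ne.symm (pow_ne_zero 2 hv))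
    rw [le_div_iff₀ hS2]
    have hqc := qsum_add_compl G x
    rw [hxs, hcardR] at hqc
    have hGcx := hGcb x
    rw [qsum_irrel G _ dR x]
    linarith
end

section
/- Let G be a graph on n vertices not containing K_{r+1}, with n = kr + r - 1 (i.e., t = r-1), and suppose α(G) = n - ⌈n/r⌉ = n - (k+1). Then G is the Turán graph T_{n,r}. -/
open SimpleGraph Matrix BigOperators

section Helpers
open Finset


lemma all_eq_of_sum_eq {α : Type*} {s : Finset α} {f : α → ℕ} {m : ℕ}
    (h1 : ∀ i ∈ s, f i ≤ m) (h2 : s.card * m ≤ ∑ i ∈ s, f i) : ∀ i ∈ s, f i = m := by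
  by_contra hc
  push_neg at hc
  obtain ⟨i, hi, hne⟩ := hc
  have : ∑ j ∈ s, f j < ∑ _j ∈ s, m :=
    Finset.sum_lt_sum h1 ⟨i, hi, lt_of_le_of_ne (h1 i hi) hne⟩
  rw [Finset.sum_const, smul_eq_mul] at this
  omega

lemma exists_equiv_comm {V A B : Type*} [Fintype V] [DecidableEq V] [DecidableEq A] [DecidableEq B]
    (c : V → A) (t : V → B) (σ : A ≃ B)
    (h : ∀ a, (Finset.univ.filter (fun v => c v = a)).card
        = (Finset.univ.filter (fun v => t v = σ a)).card) :
    ∃ e : V ≃ V, ∀ v, t (e v) = σ (c v) := by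
  have F : ∀ a : A, {v // c v = a} ≃ {v // t v = σ a} := fun a =>
    Fintype.equivOfCardEq (by rw [Fintype.card_subtype, Fintype.card_subtype, h a])
  refine ⟨(Equiv.sigmaFiberEquiv c).symm.trans ((Equiv.sigmaCongr σ F).trans
    (Equiv.sigmaFiberEquiv t)), fun v => ?_⟩
  exact (F (c v) ⟨v, rfl⟩).property

lemma residue_fiber_card {n r k : ℕ} (hr : 2 ≤ r) (hn : n + 1 = k * r + r) (i : ℕ) (hi : i < r) :
    (Finset.univ.filter (fun v : Fin n => (v : ℕ) % r = i)).card
      = if i = r - 1 then k else k + 1 := by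
  have hr0 : 0 < r := by omega
  set m : ℕ := if i = r - 1 then k else k + 1 with hm
  have hb : ∀ j, j < m → j * r + i < n := by
    intro j hj
    have h2 : (j+1)*r = j*r + r := by ring
    have h3 : (k+1)*r = k*r + r := by ring
    by_cases hc : i = r - 1
    · have hmk : m = k := by rw [hm, if_pos hc]
      have h4 : (j+1)*r ≤ k*r := Nat.mul_le_mul_right r (by omega)
      omega
    · have hmk : m = k + 1 := by rw [hm, if_neg hc]
      have h4 : (j+1)*r ≤ (k+1)*r := Nat.mul_le_mul_right r (by omega)
      omega
  rw [← Finset.card_range m]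
  refine Finset.card_bij' (fun v _ => (v : ℕ) / r)
    (fun j hj => (⟨j * r + i, hb j (Finset.mem_range.mp hj)⟩ : Fin n)) ?_ ?_ ?_ ?_
  · intro v hv
    rw [Finset.mem_filter] at hv
    rw [Finset.mem_range]
    by_contra hc
    push_neg at hc
    have h4 : r * m ≤ r * ((v:ℕ)/r) := Nat.mul_le_mul_left r hc
    have h5 := Nat.div_add_mod (v : ℕ) r
    have hvn : (v : ℕ) < n := v.2
    have h6 : r * k = k * r := by ring
    have h7 : r * (k+1) = k * r + r := by ring
    by_cases hc2 : i = r - 1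
    · have hmk : m = k := by rw [hm, if_pos hc2]
      rw [hmk] at h4
      omega
    · have hmk : m = k + 1 := by rw [hm, if_neg hc2]
      rw [hmk] at h4
      omega
  · intro j hj
    rw [Finset.mem_filter]
    refine ⟨Finset.mem_univ _, ?_⟩
    show (j * r + i) % r = i
    rw [add_comm, Nat.add_mul_mod_self_right, Nat.mod_eq_of_lt hi]
  · intro v hv
    rw [Finset.mem_filter] at hv
    have h5 := Nat.div_add_mod (v : ℕ) r
    apply Fin.ext
    have h6 : r * ((v:ℕ)/r) = ((v:ℕ)/r) * r := mul_comm _ _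
    show ((v:ℕ)/r) * r + i = (v:ℕ)
    omega
  · intro j hj
    show (j * r + i) / r = j
    rw [add_comm, Nat.add_mul_div_right _ _ hr0, Nat.div_eq_of_lt hi, zero_add]


section TestVec
variable {n k : ℕ} {H : SimpleGraph (Fin n)} [DecidableRel H.Adj]

/-- Core computation for the test vector `x = d·1_v - 1_{N(v)}`. -/
lemma testvec_facts (v : Fin n) :
    (∑ z, (fun z => if z = v then ((H.degree v : ℝ)) else
        if H.Adj v z then -1 else 0) z) = 0 ∧
    (∑ z, ((fun z => if z = v then ((H.degree v : ℝ)) else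
        if H.Adj v z then -1 else 0) z)^2) = (H.degree v : ℝ)^2 + H.degree v := by
  classical
  set d : ℝ := (H.degree v : ℝ) with hd
  set x : Fin n → ℝ := fun z => if z = v then d else if H.Adj v z then -1 else 0 with hx
  have hNcard : (H.neighborFinset v).card = H.degree v := H.card_neighborFinset_eq_degree v
  constructor
  · have hsplit : ∀ z, x z = (if z = v then d else 0) + (if z ∈ H.neighborFinset v then (-1:ℝ) else 0) := by
      intro z
      by_cases h1 : z = v
      · subst h1
        simp [hx, H.irrefl]
      · by_cases h2 : H.Adj v z
        · simp [hx, h1, h2, SimpleGraph.mem_neighborFinset]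
        · simp [hx, h1, h2, SimpleGraph.mem_neighborFinset]
    rw [Finset.sum_congr rfl (fun z _ => hsplit z), Finset.sum_add_distrib,
      Finset.sum_ite_eq' Finset.univ v (fun _ => d), Finset.sum_ite_mem,
      Finset.univ_inter, Finset.sum_const, hNcard]
    simp [hd]
  · have hsplit : ∀ z, (x z)^2 = (if z = v then d^2 else 0) + (if z ∈ H.neighborFinset v then (1:ℝ) else 0) := by
      intro z
      by_cases h1 : z = v
      · subst h1
        simp [hx, H.irrefl]
      · by_cases h2 : H.Adj v z
        · simp [hx, h1, h2, SimpleGraph.mem_neighborFinset]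
        · simp [hx, h1, h2, SimpleGraph.mem_neighborFinset]
    rw [Finset.sum_congr rfl (fun z _ => hsplit z), Finset.sum_add_distrib,
      Finset.sum_ite_eq' Finset.univ v (fun _ => d^2), Finset.sum_ite_mem,
      Finset.univ_inter, Finset.sum_const, hNcard]
    simp [hd]

end TestVec

section TestVec2
variable {n k : ℕ} {H : SimpleGraph (Fin n)} [DecidableRel H.Adj]

lemma qf_pieces (v : Fin n) :
    (∑ j, if H.Adj v j then ((fun z => if z = v then ((H.degree v : ℝ)) else
        if H.Adj v z then -1 else 0) v - (fun z => if z = v then ((H.degree v : ℝ)) else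
        if H.Adj v z then -1 else 0) j)^2 else 0) = (H.degree v : ℝ) * ((H.degree v : ℝ)+1)^2 ∧
    (∀ i ∈ H.neighborFinset v, ((H.degree v : ℝ)+1)^2 ≤
      ∑ j, if H.Adj i j then ((fun z => if z = v then ((H.degree v : ℝ)) else
        if H.Adj v z then -1 else 0) i - (fun z => if z = v then ((H.degree v : ℝ)) else
        if H.Adj v z then -1 else 0) j)^2 else 0) := by
  classical
  set d : ℝ := (H.degree v : ℝ) with hd
  set x : Fin n → ℝ := fun z => if z = v then d else if H.Adj v z then -1 else 0 with hx
  have hNcard : (H.neighborFinset v).card = H.degree v := H.card_neighborFinset_eq_degree v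
  have hxv : x v = d := by simp [x]
  have hxadj : ∀ z, H.Adj v z → x z = -1 := by
    intro z h
    have : z ≠ v := fun e => H.irrefl (e ▸ h)
    simp [x, this, h]
  have hnn : ∀ (i j : Fin n), (0:ℝ) ≤ if H.Adj i j then (x i - x j)^2 else 0 := by
    intro i j
    split
    · positivity
    · exact le_rfl
  constructor
  · have hpt : ∀ j, (if H.Adj v j then (x v - x j)^2 else 0)
        = (if j ∈ H.neighborFinset v then (d+1)^2 else 0) := by
      intro j
      by_cases h : H.Adj v j
      · rw [if_pos h, if_pos ((H.mem_neighborFinset v j).mpr h), hxv, hxadj j h]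
        ring
      · rw [if_neg h, if_neg (fun hc => h ((H.mem_neighborFinset v j).mp hc))]
    rw [Finset.sum_congr rfl (fun j _ => hpt j), Finset.sum_ite_mem,
      Finset.univ_inter, Finset.sum_const, hNcard]
    rw [nsmul_eq_mul]
  · intro i hi
    have hvi : H.Adj v i := (H.mem_neighborFinset v i).mp hi
    have hle := Finset.single_le_sum (f := fun j => if H.Adj i j then (x i - x j)^2 else 0)
      (fun j _ => hnn i j) (Finset.mem_univ v)
    have : (if H.Adj i v then (x i - x v)^2 else 0) = (d+1)^2 := by
      rw [if_pos hvi.symm, hxv, hxadj i hvi]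
      ring
    rwa [this] at hle
end TestVec2

section Main
variable {n k : ℕ} {H : SimpleGraph (Fin n)} [DecidableRel H.Adj]

lemma qf_nonneg_term (x : Fin n → ℝ) (i j : Fin n) :
    (0:ℝ) ≤ if H.Adj i j then (x i - x j)^2 else 0 := by
  split
  · positivity
  · exact le_rfl

lemma deg_le_of_master
    (master : ∀ y : Fin n → ℝ, (∑ z, y z) = 0 →
      (∑ i, ∑ j, if H.Adj i j then (y i - y j)^2 else 0) ≤ 2*((k:ℝ)+1)*(∑ z, (y z)^2))
    (v : Fin n) : H.degree v ≤ k := by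
  classical
  set d : ℝ := (H.degree v : ℝ) with hd
  set x : Fin n → ℝ := fun z => if z = v then d else if H.Adj v z then -1 else 0 with hx
  obtain ⟨hsum, hsumsq⟩ := testvec_facts (H := H) v
  obtain ⟨hgv, hgN⟩ := qf_pieces (H := H) v
  have hNcard : (H.neighborFinset v).card = H.degree v := H.card_neighborFinset_eq_degree v
  have hvN : v ∉ H.neighborFinset v := by simp
  have hmaster := master x hsum
  rw [hsumsq] at hmaster
  have hlow : d * (d+1)^2 + d * (d+1)^2 ≤ ∑ i, ∑ j, if H.Adj i j then (x i - x j)^2 else 0 := by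
    have h1 : ∑ i ∈ insert v (H.neighborFinset v), (∑ j, if H.Adj i j then (x i - x j)^2 else 0)
        ≤ ∑ i, ∑ j, if H.Adj i j then (x i - x j)^2 else 0 :=
      Finset.sum_le_sum_of_subset_of_nonneg (Finset.subset_univ _)
        (fun i _ _ => Finset.sum_nonneg (fun j _ => qf_nonneg_term x i j))
    rw [Finset.sum_insert hvN] at h1
    refine le_trans ?_ h1
    rw [hgv]
    have h2 : ∑ i ∈ H.neighborFinset v, ((d+1)^2 : ℝ)
        ≤ ∑ i ∈ H.neighborFinset v, (∑ j, if H.Adj i j then (x i - x j)^2 else 0) :=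
      Finset.sum_le_sum (fun i hi => hgN i hi)
    rw [Finset.sum_const, hNcard, nsmul_eq_mul] at h2
    linarith
  by_contra hc
  push_neg at hc
  have hcast : (k:ℝ) + 1 ≤ d := by
    rw [hd]
    exact_mod_cast hc
  have hd1 : (1:ℝ) ≤ d := by
    have : (0:ℝ) ≤ (k:ℝ) := Nat.cast_nonneg k
    linarith
  nlinarith [hlow, hmaster, hcast, hd1]

lemma closed_of_master
    (master : ∀ y : Fin n → ℝ, (∑ z, y z) = 0 →
      (∑ i, ∑ j, if H.Adj i j then (y i - y j)^2 else 0) ≤ 2*((k:ℝ)+1)*(∑ z, (y z)^2))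
    (v u w : Fin n) (hdeg : H.degree v = k) (hvu : H.Adj v u) (huw : H.Adj u w)
    (hwv : w ≠ v) : H.Adj v w := by
  classical
  by_contra hnvw
  set d : ℝ := (H.degree v : ℝ) with hd
  set x : Fin n → ℝ := fun z => if z = v then d else if H.Adj v z then -1 else 0 with hx
  obtain ⟨hsum, hsumsq⟩ := testvec_facts (H := H) v
  obtain ⟨hgv, hgN⟩ := qf_pieces (H := H) v
  have hNcard : (H.neighborFinset v).card = H.degree v := H.card_neighborFinset_eq_degree v
  have hvN : v ∉ H.neighborFinset v := by simp
  have huN : u ∈ H.neighborFinset v := (H.mem_neighborFinset v u).mpr hvu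
  have hwN : w ∉ H.neighborFinset v := fun hc => hnvw ((H.mem_neighborFinset v w).mp hc)
  have hxv : x v = d := by simp [hx]
  have hxu : x u = -1 := by
    have : u ≠ v := fun e => H.irrefl (e ▸ hvu)
    simp [hx, this, hvu]
  have hxw : x w = 0 := by simp [hx, hwv, hnvw]
  have hvw : v ≠ w := fun e => hwv e.symm
  have huv : u ≠ v := fun e => H.irrefl (e ▸ hvu)
  have huw' : u ≠ w := fun e => H.irrefl (e ▸ huw)
  have hmaster := master x hsum
  rw [hsumsq] at hmaster
  -- lower bound on g u
  have hgu : (d+1)^2 + 1 ≤ ∑ j, if H.Adj u j then (x u - x j)^2 else 0 := by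
    have hsub : ({v, w} : Finset (Fin n)) ⊆ Finset.univ := Finset.subset_univ _
    have h1 : ∑ j ∈ ({v, w} : Finset (Fin n)), (if H.Adj u j then (x u - x j)^2 else 0)
        ≤ ∑ j, if H.Adj u j then (x u - x j)^2 else 0 :=
      Finset.sum_le_sum_of_subset_of_nonneg hsub (fun j _ _ => qf_nonneg_term x u j)
    rw [Finset.sum_pair hvw] at h1
    have hpair : (if H.Adj u v then (x u - x v)^2 else 0) + (if H.Adj u w then (x u - x w)^2 else 0)
        = (d+1)^2 + 1 := by
      rw [if_pos hvu.symm, if_pos huw, hxu, hxv, hxw]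
      ring
    rw [hpair] at h1
    exact h1
  -- lower bound on g w
  have hgw : (1:ℝ) ≤ ∑ j, if H.Adj w j then (x w - x j)^2 else 0 := by
    have hle := Finset.single_le_sum (f := fun j => if H.Adj w j then (x w - x j)^2 else 0)
      (fun j _ => qf_nonneg_term x w j) (Finset.mem_univ u)
    have hterm : (if H.Adj w u then (x w - x u)^2 else 0) = 1 := by
      rw [if_pos huw.symm, hxu, hxw]
      norm_num
    rw [hterm] at hle
    exact hle
  -- sum over neighborhood with improvement at u
  have hNsum : d * (d+1)^2 + 1
      ≤ ∑ i ∈ H.neighborFinset v, (∑ j, if H.Adj i j then (x i - x j)^2 else 0) := by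
    have h2 : ∑ i ∈ H.neighborFinset v, ((d+1)^2 + if i = u then (1:ℝ) else 0)
        ≤ ∑ i ∈ H.neighborFinset v, (∑ j, if H.Adj i j then (x i - x j)^2 else 0) := by
      refine Finset.sum_le_sum (fun i hi => ?_)
      by_cases hiu : i = u
      · subst hiu
        rw [if_pos rfl]
        exact hgu
      · rw [if_neg hiu, add_zero]
        exact hgN i hi
    rw [Finset.sum_add_distrib, Finset.sum_const, hNcard, nsmul_eq_mul,
      Finset.sum_ite_eq' (H.neighborFinset v) u (fun _ => (1:ℝ)), if_pos huN] at h2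
    linarith
  have hlow : d * (d+1)^2 + (d * (d+1)^2 + 1) + 1
      ≤ ∑ i, ∑ j, if H.Adj i j then (x i - x j)^2 else 0 := by
    have hwmem : w ∉ insert v (H.neighborFinset v) := by
      simp only [Finset.mem_insert]
      push_neg
      exact ⟨hwv, hwN⟩
    have h1 : ∑ i ∈ insert w (insert v (H.neighborFinset v)),
        (∑ j, if H.Adj i j then (x i - x j)^2 else 0)
        ≤ ∑ i, ∑ j, if H.Adj i j then (x i - x j)^2 else 0 :=
      Finset.sum_le_sum_of_subset_of_nonneg (Finset.subset_univ _)
        (fun i _ _ => Finset.sum_nonneg (fun j _ => qf_nonneg_term x i j))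
    rw [Finset.sum_insert hwmem, Finset.sum_insert hvN] at h1
    refine le_trans ?_ h1
    rw [hgv]
    linarith [hgw, hNsum]
  rw [← hd] at hmaster
  have hdk : d = (k:ℝ) := by
    rw [hd, hdeg]
  rw [hdk] at hlow hmaster
  nlinarith [hlow, hmaster]

end Main


lemma exists_maximal_clique' {V : Type*} [Fintype V] [DecidableEq V] (G : SimpleGraph V)
    (s0 : Finset V) (h0 : G.IsClique (s0 : Set V)) :
    ∃ S : Finset V, s0 ⊆ S ∧ G.IsClique (S : Set V) ∧
      ∀ z, z ∉ S → ¬G.IsClique ((insert z S : Finset V) : Set V) := by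
  classical
  set 𝒞 : Finset (Finset V) :=
    Finset.univ.filter (fun T => s0 ⊆ T ∧ G.IsClique (T : Set V)) with h𝒞
  have hne : 𝒞.Nonempty := ⟨s0, by simp [h𝒞, h0]⟩
  obtain ⟨S, hS𝒞, hmax⟩ := Finset.exists_max_image 𝒞 Finset.card hne
  rw [h𝒞, Finset.mem_filter] at hS𝒞
  refine ⟨S, hS𝒞.2.1, hS𝒞.2.2, fun z hz hcl => ?_⟩
  have hmem : insert z S ∈ 𝒞 := by
    rw [h𝒞, Finset.mem_filter]
    exact ⟨Finset.mem_univ _, hS𝒞.2.1.trans (Finset.subset_insert _ _), hcl⟩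
  have := hmax _ hmem
  rw [Finset.card_insert_of_notMem hz] at this
  omega

lemma clique_card_le_of_cliqueFree {V : Type*} [DecidableEq V] {r : ℕ} (G : SimpleGraph V)
    (hfree : G.CliqueFree (r+1)) (S : Finset V) (hS : G.IsClique (S : Set V)) : S.card ≤ r := by
  by_contra h
  push_neg at h
  obtain ⟨t, hts, htc⟩ := Finset.exists_subset_card_eq (Nat.succ_le_of_lt h)
  exact hfree t ⟨hS.subset (Finset.coe_subset.mpr hts), htc⟩

lemma maxclique_dominates {V : Type*} [Fintype V] [DecidableEq V] (G : SimpleGraph V)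
    (S : Finset V) (hS : G.IsClique (S : Set V))
    (hmax : ∀ z, z ∉ S → ¬G.IsClique ((insert z S : Finset V) : Set V))
    (z : V) (hz : z ∉ S) : ∃ s ∈ S, Gᶜ.Adj z s := by
  by_contra h
  push_neg at h
  apply hmax z hz
  rw [Finset.coe_insert]
  refine hS.insert (fun b hb hne => ?_)
  have hb' := h b hb
  rw [SimpleGraph.compl_adj] at hb'
  push_neg at hb'
  exact hb' hne

lemma trans_of_closed {n r k : ℕ} (G : SimpleGraph (Fin n)) [DecidableEq (Fin n)]
    [DecidableRel G.Adj]
    (hfree : G.CliqueFree (r+1))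
    (hrk : n + 1 = (k+1) * r) (hr : r ≤ n)
    (hdeg : ∀ v, Gᶜ.degree v ≤ k)
    (hclosed : ∀ v u w, Gᶜ.degree v = k → Gᶜ.Adj v u → Gᶜ.Adj u w → w ≠ v → Gᶜ.Adj v w) :
    ∀ v u w, Gᶜ.Adj v u → Gᶜ.Adj v w → u ≠ w → Gᶜ.Adj u w := by
  classical
  intro v u w hvu hvw huw
  by_contra hne
  have hGuw : G.Adj u w := by
    by_contra hg
    exact hne ((SimpleGraph.compl_adj G u w).mpr ⟨huw, hg⟩)
  have hpair : G.IsClique (({u, w} : Finset (Fin n)) : Set (Fin n)) := by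
    rw [Finset.coe_insert, Finset.coe_singleton]
    intro a ha b hb hab
    rcases ha with ha | ha <;> rcases hb with hb | hb <;> subst ha <;> subst hb
    · exact absurd rfl hab
    · exact hGuw
    · exact hGuw.symm
    · exact absurd rfl hab
  obtain ⟨S, hsub, hSclique, hSmax⟩ := exists_maximal_clique' G {u, w} hpair
  have hcardS : S.card ≤ r := clique_card_le_of_cliqueFree G hfree S hSclique
  have huS : u ∈ S := hsub (by simp)
  have hwS : w ∈ S := hsub (by simp)
  have hvS : v ∉ S := by
    intro hv
    have hvu' : v ≠ u := fun e => Gᶜ.irrefl (e ▸ hvu)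
    have := hSclique hv huS hvu'
    rw [SimpleGraph.compl_adj] at hvu
    exact hvu.2 this
  set C : Fin n → Finset (Fin n) := fun s => insert s (Gᶜ.neighborFinset s) with hC
  have hCcard : ∀ s, (C s).card = Gᶜ.degree s + 1 := by
    intro s
    rw [hC]
    simp only []
    rw [Finset.card_insert_of_notMem (by simp), SimpleGraph.card_neighborFinset_eq_degree]
  -- covering
  have hcover : Finset.univ.erase v ⊆ S.biUnion (fun s => (C s).erase v) := by
    intro z hz
    rw [Finset.mem_erase] at hz
    rw [Finset.mem_biUnion]
    by_cases hzS : z ∈ S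
    · exact ⟨z, hzS, Finset.mem_erase.mpr ⟨hz.1, Finset.mem_insert_self _ _⟩⟩
    · obtain ⟨s, hs, hadj⟩ := maxclique_dominates G S hSclique hSmax z hzS
      exact ⟨s, hs, Finset.mem_erase.mpr ⟨hz.1,
        Finset.mem_insert_of_mem ((Gᶜ.mem_neighborFinset s z).mpr hadj.symm)⟩⟩
  have h1 : n - 1 ≤ ∑ s ∈ S, ((C s).erase v).card := by
    have := Finset.card_le_card hcover
    have h2 := Finset.card_biUnion_le (s := S) (t := fun s => (C s).erase v)
    have h3 : (Finset.univ.erase v).card = n - 1 := by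
      rw [Finset.card_erase_of_mem (Finset.mem_univ v), Finset.card_univ, Fintype.card_fin]
    omega
  have h4 : ∑ s ∈ S, ((C s).erase v).card + 2 ≤ ∑ s ∈ S, (C s).card := by
    have hpt : ∀ s ∈ S, ((C s).erase v).card +
        ((if s = u then 1 else 0) + (if s = w then 1 else 0)) ≤ (C s).card := by
      intro s hs
      by_cases hsu : s = u
      · subst hsu
        rw [if_pos rfl, if_neg huw]
        have hvC : v ∈ C s := Finset.mem_insert_of_mem ((Gᶜ.mem_neighborFinset s v).mpr hvu.symm)
        rw [← Finset.card_erase_add_one hvC]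
      · by_cases hsw : s = w
        · subst hsw
          rw [if_neg hsu, if_pos rfl]
          have hvC : v ∈ C s := Finset.mem_insert_of_mem ((Gᶜ.mem_neighborFinset s v).mpr hvw.symm)
          rw [← Finset.card_erase_add_one hvC]
        · rw [if_neg hsu, if_neg hsw]
          have := Finset.card_erase_le (s := C s) (a := v)
          omega
    have h5 := Finset.sum_le_sum hpt
    rw [Finset.sum_add_distrib, Finset.sum_add_distrib,
      Finset.sum_ite_eq' S u (fun _ => 1), Finset.sum_ite_eq' S w (fun _ => 1),
      if_pos huS, if_pos hwS] at h5
    omega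
  have h6 : ∑ s ∈ S, (C s).card = ∑ s ∈ S, (Gᶜ.degree s + 1) :=
    Finset.sum_congr rfl (fun s _ => hCcard s)
  have h7 : ∑ s ∈ S, (Gᶜ.degree s + 1) ≤ S.card * (k+1) := by
    have := Finset.sum_le_sum (s := S) (f := fun s => Gᶜ.degree s + 1) (g := fun _ => k+1)
      (fun s _ => by show Gᶜ.degree s + 1 ≤ k + 1; have := hdeg s; omega)
    rwa [Finset.sum_const, smul_eq_mul] at this
  have h8 : S.card * (k+1) ≤ r * (k+1) := Nat.mul_le_mul_right _ hcardS
  have h9 : r * (k+1) = n + 1 := by rw [hrk]; ring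
  have hn1 : 1 ≤ n := v.pos
  have hforced : ∀ s ∈ S, Gᶜ.degree s + 1 = k + 1 := by
    apply all_eq_of_sum_eq (fun s hs => by have := hdeg s; omega)
    omega
  have hdu : Gᶜ.degree u = k := by have := hforced u huS; omega
  exact hne (hclosed u v w hdu hvu.symm hvw (fun e => huw e.symm))

lemma structure_iso {n r k : ℕ} (hr : 2 ≤ r) (hk : 1 ≤ k) (hn' : n + 1 = (k+1)*r)
    (G : SimpleGraph (Fin n)) [DecidableEq (Fin n)] [DecidableRel G.Adj]
    (hfree : G.CliqueFree (r+1))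
    (hdeg : ∀ v, Gᶜ.degree v ≤ k)
    (htr : ∀ v u w, Gᶜ.Adj v u → Gᶜ.Adj v w → u ≠ w → Gᶜ.Adj u w) :
    Nonempty (G ≃g turanGraph n r) := by
  classical
  obtain ⟨S, -, hSclique, hSmax⟩ := exists_maximal_clique' G ∅ (by simp)
  have hcardS : S.card ≤ r := clique_card_le_of_cliqueFree G hfree S hSclique
  set C : Fin n → Finset (Fin n) := fun s => insert s (Gᶜ.neighborFinset s) with hC
  have hCcard : ∀ s, (C s).card = Gᶜ.degree s + 1 := by
    intro s
    rw [hC]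
    simp only []
    rw [Finset.card_insert_of_notMem (by simp), SimpleGraph.card_neighborFinset_eq_degree]
  have hCmem : ∀ s z, z ∈ C s ↔ (z = s ∨ Gᶜ.Adj s z) := by
    intro s z
    rw [hC]
    simp only [Finset.mem_insert, SimpleGraph.mem_neighborFinset]
  have hcover : Finset.univ ⊆ S.biUnion C := by
    intro z _
    rw [Finset.mem_biUnion]
    by_cases hzS : z ∈ S
    · exact ⟨z, hzS, (hCmem z z).mpr (Or.inl rfl)⟩
    · obtain ⟨s, hs, hadj⟩ := maxclique_dominates G S hSclique hSmax z hzS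
      exact ⟨s, hs, (hCmem s z).mpr (Or.inr hadj.symm)⟩
  have hcount : n ≤ ∑ s ∈ S, (Gᶜ.degree s + 1) := by
    have h1 := Finset.card_le_card hcover
    have h2 := Finset.card_biUnion_le (s := S) (t := C)
    have h3 : (Finset.univ : Finset (Fin n)).card = n := by
      rw [Finset.card_univ, Fintype.card_fin]
    have h4 : ∑ s ∈ S, (C s).card = ∑ s ∈ S, (Gᶜ.degree s + 1) :=
      Finset.sum_congr rfl (fun s _ => hCcard s)
    omega
  have hsumle : ∑ s ∈ S, (Gᶜ.degree s + 1) ≤ S.card * (k+1) := by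
    have := Finset.sum_le_sum (s := S) (f := fun s => Gᶜ.degree s + 1) (g := fun _ => k+1)
      (fun s _ => by show Gᶜ.degree s + 1 ≤ k + 1; have := hdeg s; omega)
    rwa [Finset.sum_const, smul_eq_mul] at this
  have hcardr : S.card = r := by
    by_contra hne
    have hlt : S.card + 1 ≤ r := lt_of_le_of_ne hcardS hne
    have hmul := Nat.mul_le_mul_right (k+1) hlt
    have hexp : (S.card + 1) * (k+1) = S.card * (k+1) + (k+1) := by ring
    have hcomm : (k+1) * r = r * (k+1) := by ring
    omega
  have hcomm : (k+1) * r = r * (k+1) := by ring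
  -- the unique "part" containing z
  have huniq : ∀ z : Fin n, ∃! s, s ∈ S ∧ (z = s ∨ Gᶜ.Adj s z) := by
    intro z
    have key : ∀ s ∈ S, (z = s ∨ Gᶜ.Adj s z) → ∀ s' ∈ S, (z = s' ∨ Gᶜ.Adj s' z) → s' = s := by
      intro s hs hp s' hs' hp'
      by_contra hss
      have hGss : G.Adj s' s := hSclique hs' hs hss
      rcases hp with hp | hp <;> rcases hp' with hp' | hp'
      · exact hss (hp' ▸ hp ▸ rfl)
      · subst hp
        rw [SimpleGraph.compl_adj] at hp'
        exact hp'.2 hGss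
      · subst hp'
        rw [SimpleGraph.compl_adj] at hp
        exact hp.2 hGss.symm
      · have := htr z s' s hp'.symm hp.symm (fun e => hss e)
        rw [SimpleGraph.compl_adj] at this
        exact this.2 hGss
    by_cases hzS : z ∈ S
    · exact ⟨z, ⟨hzS, Or.inl rfl⟩, fun s' hs' => key z hzS (Or.inl rfl) s' hs'.1 hs'.2⟩
    · obtain ⟨s, hs, hadj⟩ := maxclique_dominates G S hSclique hSmax z hzS
      exact ⟨s, ⟨hs, Or.inr hadj.symm⟩, fun s' hs' =>
        key s hs (Or.inr hadj.symm) s' hs'.1 hs'.2⟩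
  set c : Fin n → Fin n := fun z => Finset.choose (fun s => z = s ∨ Gᶜ.Adj s z) S (huniq z)
    with hc
  have hcS : ∀ z, c z ∈ S := fun z =>
    Finset.choose_mem (fun s => z = s ∨ Gᶜ.Adj s z) S (huniq z)
  have hcP : ∀ z, z = c z ∨ Gᶜ.Adj (c z) z := fun z =>
    Finset.choose_property (fun s => z = s ∨ Gᶜ.Adj s z) S (huniq z)
  have hcU : ∀ z s, s ∈ S → (z = s ∨ Gᶜ.Adj s z) → s = c z := by
    intro z s hs hp
    exact (huniq z).unique ⟨hs, hp⟩ ⟨hcS z, hcP z⟩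
  have hcself : ∀ s ∈ S, c s = s := fun s hs => (hcU s s hs (Or.inl rfl)).symm
  -- adjacency characterisation
  have hadj_iff : ∀ a b : Fin n, G.Adj a b ↔ c a ≠ c b := by
    intro a b
    constructor
    · intro hab hcc
      have hab' : a ≠ b := hab.ne
      have hpa := hcP a
      have hpb := hcP b
      rw [hcc] at hpa
      rcases hpa with hpa | hpa <;> rcases hpb with hpb | hpb
      · exact hab' (hpa ▸ hpb ▸ rfl)
      · -- a = c b, Gᶜ.Adj (c b) b
        rw [← hpa] at hpb
        rw [SimpleGraph.compl_adj] at hpb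
        exact hpb.2 hab
      · rw [← hpb] at hpa
        rw [SimpleGraph.compl_adj] at hpa
        exact hpa.2 hab.symm
      · have := htr (c b) a b hpa hpb hab'
        rw [SimpleGraph.compl_adj] at this
        exact this.2 hab
    · intro hcc
      by_contra hg
      apply hcc
      by_cases hab : a = b
      · rw [hab]
      · have hHab : Gᶜ.Adj a b := (SimpleGraph.compl_adj G a b).mpr ⟨hab, hg⟩
        rcases hcP a with hpa | hpa
        · exact hcU b (c a) (hcS a) (Or.inr (hpa ▸ hHab))
        · by_cases hb : c a = b
          · exact hcU b (c a) (hcS a) (Or.inl hb.symm)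
          · have := htr a (c a) b hpa.symm hHab hb
            exact hcU b (c a) (hcS a) (Or.inr this)
  -- fibers of c
  have hfib : ∀ s ∈ S, (Finset.univ.filter (fun z => c z = s)).card = Gᶜ.degree s + 1 := by
    intro s hs
    have : Finset.univ.filter (fun z => c z = s) = C s := by
      ext z
      rw [Finset.mem_filter, hCmem]
      constructor
      · rintro ⟨-, hz⟩
        rcases hcP z with hp | hp
        · exact Or.inl (hz ▸ hp)
        · exact Or.inr (hz ▸ hp)
      · intro hz
        exact ⟨Finset.mem_univ _, (hcU z s hs hz).symm⟩
    rw [this, hCcard]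
  have htotal : ∑ s ∈ S, (Gᶜ.degree s + 1) = n := by
    have := Finset.card_eq_sum_card_fiberwise (s := (Finset.univ : Finset (Fin n))) (t := S)
      (f := c) (fun z _ => hcS z)
    rw [Finset.card_univ, Fintype.card_fin] at this
    calc ∑ s ∈ S, (Gᶜ.degree s + 1)
        = ∑ s ∈ S, (Finset.univ.filter (fun z => c z = s)).card :=
          Finset.sum_congr rfl (fun s hs => (hfib s hs).symm)
      _ = n := this.symm
  -- find the small part
  have hs0 : ∃ s₀ ∈ S, Gᶜ.degree s₀ + 1 = k := by
    have hex : ∃ s₀ ∈ S, Gᶜ.degree s₀ + 1 < k + 1 := by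
      by_contra hc'
      push_neg at hc'
      have hall : ∀ s ∈ S, Gᶜ.degree s + 1 = k + 1 := by
        intro s hs
        have h1 := hdeg s
        have h2 := hc' s hs
        omega
      have : ∑ s ∈ S, (Gᶜ.degree s + 1) = r * (k+1) := by
        rw [Finset.sum_congr rfl hall, Finset.sum_const, smul_eq_mul, hcardr]
      omega
    obtain ⟨s₀, hs₀, hlt⟩ := hex
    refine ⟨s₀, hs₀, ?_⟩
    have hsplit : ∑ s ∈ S, (Gᶜ.degree s + 1)
        = (Gᶜ.degree s₀ + 1) + ∑ s ∈ S.erase s₀, (Gᶜ.degree s + 1) :=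
      (Finset.add_sum_erase S _ hs₀).symm
    have herase : ∑ s ∈ S.erase s₀, (Gᶜ.degree s + 1) ≤ (r-1) * (k+1) := by
      have h1 : (S.erase s₀).card = r - 1 := by
        rw [Finset.card_erase_of_mem hs₀, hcardr]
      have := Finset.sum_le_sum (s := S.erase s₀) (f := fun s => Gᶜ.degree s + 1)
        (g := fun _ => k+1) (fun s _ => by
          show Gᶜ.degree s + 1 ≤ k + 1; have := hdeg s; omega)
      rwa [Finset.sum_const, smul_eq_mul, h1] at this
    have hexp : (r-1) * (k+1) + (k+1) = r * (k+1) := by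
      have : r - 1 + 1 = r := by omega
      calc (r-1) * (k+1) + (k+1) = (r-1+1) * (k+1) := by ring
      _ = r * (k+1) := by rw [this]
    omega
  obtain ⟨s₀, hs₀S, hs₀deg⟩ := hs0
  have hrest : ∀ s ∈ S.erase s₀, Gᶜ.degree s + 1 = k + 1 := by
    apply all_eq_of_sum_eq
    · intro s _
      have := hdeg s
      omega
    · have h1 : (S.erase s₀).card = r - 1 := by
        rw [Finset.card_erase_of_mem hs₀S, hcardr]
      have hsplit : ∑ s ∈ S, (Gᶜ.degree s + 1)
          = (Gᶜ.degree s₀ + 1) + ∑ s ∈ S.erase s₀, (Gᶜ.degree s + 1) :=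
        (Finset.add_sum_erase S _ hs₀S).symm
      have hexp : (r-1) * (k+1) + (k+1) = r * (k+1) := by
        have h2 : r - 1 + 1 = r := by omega
        calc (r-1) * (k+1) + (k+1) = (r-1+1) * (k+1) := by ring
        _ = r * (k+1) := by rw [h2]
      rw [h1]
      omega
  -- build the coloring into `Fin r`
  have hrpos : 0 < r := by omega
  have hlastlt : r - 1 < r := by omega
  set last : Fin r := ⟨r - 1, hlastlt⟩ with hlast
  set τ : {x // x ∈ S} ≃ Fin r := S.equivFinOfCardEq hcardr with hτ
  set σ' : {x // x ∈ S} ≃ Fin r := τ.trans (Equiv.swap (τ ⟨s₀, hs₀S⟩) last) with hσ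
  have hσs₀ : σ' ⟨s₀, hs₀S⟩ = last := by
    rw [hσ]
    simp [Equiv.swap_apply_left]
  set cc : Fin n → Fin r := fun z => σ' ⟨c z, hcS z⟩ with hcc
  have hccinj : ∀ a b : Fin n, (cc a = cc b) ↔ c a = c b := by
    intro a b
    constructor
    · intro h
      exact congrArg Subtype.val (σ'.injective h)
    · intro h
      show σ' ⟨c a, hcS a⟩ = σ' ⟨c b, hcS b⟩
      congr 1
      exact Subtype.ext h
  have hGadj : ∀ a b : Fin n, G.Adj a b ↔ cc a ≠ cc b := by
    intro a b
    rw [hadj_iff a b]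
    exact not_congr (hccinj a b).symm
  have hfibcc : ∀ i : Fin r, (Finset.univ.filter (fun z => cc z = i)).card
      = if i = last then k else k + 1 := by
    intro i
    have hsS : ((σ'.symm i : {x // x ∈ S}) : Fin n) ∈ S := (σ'.symm i).2
    have heq : ∀ z : Fin n, cc z = i ↔ c z = ((σ'.symm i : {x // x ∈ S}) : Fin n) := by
      intro z
      show σ' ⟨c z, hcS z⟩ = i ↔ _
      rw [Equiv.apply_eq_iff_eq_symm_apply]
      exact Subtype.ext_iff
    rw [Finset.filter_congr (fun z _ => heq z)]
    rw [hfib _ hsS]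
    by_cases hil : i = last
    · rw [if_pos hil]
      have : σ'.symm i = ⟨s₀, hs₀S⟩ := by
        rw [hil, ← hσs₀, Equiv.symm_apply_apply]
      rw [this]
      exact hs₀deg
    · rw [if_neg hil]
      have hne : ((σ'.symm i : {x // x ∈ S}) : Fin n) ≠ s₀ := by
        intro hcon
        apply hil
        have : σ'.symm i = ⟨s₀, hs₀S⟩ := Subtype.ext hcon
        rw [← hσs₀, ← this, Equiv.apply_symm_apply]
      exact hrest _ (Finset.mem_erase.mpr ⟨hne, hsS⟩)
  have hn'' : n + 1 = k * r + r := by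
    rw [hn']
    ring
  set t : Fin n → Fin r := fun z => ⟨(z : ℕ) % r, Nat.mod_lt _ hrpos⟩ with ht
  have hfibt : ∀ i : Fin r, (Finset.univ.filter (fun z => t z = i)).card
      = if i = last then k else k + 1 := by
    intro i
    have h1 : ∀ z : Fin n, t z = i ↔ (z : ℕ) % r = (i : ℕ) := by
      intro z
      rw [ht]
      exact Fin.ext_iff
    rw [Finset.filter_congr (fun z _ => h1 z), residue_fiber_card hr hn'' (i : ℕ) i.2]
    by_cases hil : i = last
    · rw [if_pos hil, if_pos]
      rw [hil, hlast]
    · rw [if_neg hil, if_neg]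
      intro hcon
      exact hil (Fin.ext (by rw [hcon, hlast]))
  obtain ⟨e, he⟩ := exists_equiv_comm cc t (Equiv.refl (Fin r))
    (fun i => by rw [hfibcc, hfibt, Equiv.refl_apply])
  refine ⟨⟨e, ?_⟩⟩
  intro a b
  show (turanGraph n r).Adj (e a) (e b) ↔ G.Adj a b
  have hmods : ∀ z : Fin n, ((e z : Fin n) : ℕ) % r = ((cc z : Fin r) : ℕ) := by
    intro z
    have := he z
    rw [Equiv.refl_apply] at this
    rw [← this]
  have hturan : (turanGraph n r).Adj (e a) (e b) ↔
      ((e a : Fin n) : ℕ) % r ≠ ((e b : Fin n) : ℕ) % r := Iff.rfl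
  rw [hturan, hmods a, hmods b, hGadj a b]
  constructor
  · intro h hcon
    exact h (by rw [hcon])
  · intro h hcon
    exact h (Fin.ext hcon)

end Helpers

theorem stmt8 {n r k : ℕ} (hr : 2 ≤ r) (hn : n = k * r + r - 1)
    (G : SimpleGraph (Fin n)) (hfree : G.CliqueFree (r + 1))
    (hα : algConn G = (n : ℝ) - ((k : ℝ) + 1)) :
    Nonempty (G ≃g SimpleGraph.turanGraph n r) := by
  classical
  letI hDE : DecidableEq (Fin n) := Classical.decEq (Fin n)
  letI hDR : DecidableRel G.Adj := Classical.decRel G.Adj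
  set Set0 : Set ℝ := { a : ℝ | ∃ x : Fin n → ℝ, x ≠ 0 ∧ ∑ v, x v = 0 ∧
      a = (x ⬝ᵥ (G.lapMatrix ℝ).mulVec x) / (x ⬝ᵥ x) } with hSet0
  have hα' : sInf Set0 = (n : ℝ) - ((k : ℝ) + 1) := hα
  have hQF : ∀ x : Fin n → ℝ, x ⬝ᵥ (G.lapMatrix ℝ).mulVec x
      = (∑ i, ∑ j, if G.Adj i j then (x i - x j)^2 else 0) / 2 := by
    intro x
    rw [← Matrix.toLinearMap₂'_apply', SimpleGraph.lapMatrix_toLinearMap₂']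
  have hbdd : BddBelow Set0 := by
    refine ⟨0, fun a ha => ?_⟩
    obtain ⟨x, -, -, rfl⟩ := ha
    apply div_nonneg
    · rw [hQF]
      apply div_nonneg _ (by norm_num)
      apply Finset.sum_nonneg
      intro i _
      apply Finset.sum_nonneg
      intro j _
      split
      · positivity
      · exact le_rfl
    · exact Finset.sum_nonneg fun v _ => mul_self_nonneg _
  have hlb : ∀ x : Fin n → ℝ, (∑ v, x v) = 0 →
      2*((n:ℝ) - ((k:ℝ)+1)) * (∑ v, (x v)^2)
        ≤ ∑ i, ∑ j, if G.Adj i j then (x i - x j)^2 else 0 := by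
    intro x hx
    by_cases hx0 : x = 0
    · subst hx0
      simp
    · have hmem : (x ⬝ᵥ (G.lapMatrix ℝ).mulVec x) / (x ⬝ᵥ x) ∈ Set0 := ⟨x, hx0, hx, rfl⟩
      have hle := hα' ▸ csInf_le hbdd hmem
      have hxx : x ⬝ᵥ x = ∑ v, (x v)^2 := by
        simp [dotProduct, sq]
      have hpos : 0 < ∑ v, (x v)^2 := by
        have : ∃ v, x v ≠ 0 := by
          by_contra hc
          push_neg at hc
          exact hx0 (funext hc)
        obtain ⟨v, hv⟩ := this
        apply Finset.sum_pos' (fun i _ => sq_nonneg _) ⟨v, Finset.mem_univ v, by positivity⟩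
      rw [hQF, hxx, div_div, le_div_iff₀ (mul_pos two_pos hpos)] at hle
      linarith [hle]
  have hfull : ∀ y : Fin n → ℝ, (∑ z, y z) = 0 →
      (∑ i, ∑ j, ((y i - y j)^2 : ℝ)) = 2*(n:ℝ)*(∑ z, (y z)^2) := by
    intro y hy
    have hstep : ∀ i : Fin n, ∑ j, ((y i - y j)^2 : ℝ)
        = (n:ℝ) * (y i)^2 - 2*(y i)*(∑ z, y z) + ∑ z, (y z)^2 := by
      intro i
      have : ∀ j : Fin n, ((y i - y j)^2 : ℝ) = (y i)^2 - 2*(y i)*(y j) + (y j)^2 := by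
        intro j; ring
      rw [Finset.sum_congr rfl (fun j _ => this j), Finset.sum_add_distrib,
        Finset.sum_sub_distrib, Finset.sum_const, Finset.card_univ, Fintype.card_fin,
        ← Finset.mul_sum, nsmul_eq_mul]
    rw [Finset.sum_congr rfl (fun i _ => hstep i)]
    rw [Finset.sum_add_distrib, Finset.sum_sub_distrib, Finset.sum_const, Finset.card_univ,
      Fintype.card_fin, ← Finset.mul_sum, ← Finset.sum_mul, nsmul_eq_mul, hy]
    rw [Finset.mul_sum]
    ring_nf
    rw [← Finset.mul_sum]
  have hsplit : ∀ y : Fin n → ℝ,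
      (∑ i, ∑ j, if G.Adj i j then ((y i - y j)^2 : ℝ) else 0)
      + (∑ i, ∑ j, if Gᶜ.Adj i j then ((y i - y j)^2 : ℝ) else 0)
      = ∑ i, ∑ j, ((y i - y j)^2 : ℝ) := by
    intro y
    rw [← Finset.sum_add_distrib]
    refine Finset.sum_congr rfl fun i _ => ?_
    rw [← Finset.sum_add_distrib]
    refine Finset.sum_congr rfl fun j _ => ?_
    by_cases hij : i = j
    · subst hij
      simp [G.irrefl]
    · by_cases h : G.Adj i j
      · have : ¬Gᶜ.Adj i j := by simp [SimpleGraph.compl_adj, h]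
        simp [h, this]
      · have : Gᶜ.Adj i j := (SimpleGraph.compl_adj G i j).mpr ⟨hij, h⟩
        simp [h, this]
  have hmaster : ∀ y : Fin n → ℝ, (∑ z, y z) = 0 →
      (∑ i, ∑ j, if Gᶜ.Adj i j then (y i - y j)^2 else 0) ≤ 2*((k:ℝ)+1)*(∑ z, (y z)^2) := by
    intro y hy
    have h1 := hlb y hy
    have h2 := hfull y hy
    have h3 := hsplit y
    linarith
  have hdeg : ∀ v, Gᶜ.degree v ≤ k := fun v => deg_le_of_master hmaster v
  have hclosed : ∀ v u w, Gᶜ.degree v = k → Gᶜ.Adj v u → Gᶜ.Adj u w → w ≠ v → Gᶜ.Adj v w :=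
    fun v u w hd h1 h2 h3 => closed_of_master hmaster v u w hd h1 h2 h3
  have hn' : n + 1 = (k+1)*r := by
    have hexp : (k+1)*r = k*r + r := by ring
    have hkr1 : 1 ≤ k * r + r := by
      have : 1 ≤ r := by omega
      omega
    omega
  by_cases hk : k = 0
  · subst hk
    have hH : ∀ a b, ¬Gᶜ.Adj a b := by
      intro a b hab
      have h1 := hdeg a
      have h2 : b ∈ Gᶜ.neighborFinset a := (Gᶜ.mem_neighborFinset a b).mpr hab
      have h3 : 0 < Gᶜ.degree a := by
        rw [← SimpleGraph.card_neighborFinset_eq_degree]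
        exact Finset.card_pos.mpr ⟨b, h2⟩
      omega
    have hGadj : ∀ a b : Fin n, G.Adj a b ↔ a ≠ b := by
      intro a b
      constructor
      · exact fun h => h.ne
      · intro h
        by_contra hg
        exact hH a b ((SimpleGraph.compl_adj G a b).mpr ⟨h, hg⟩)
    have hnr : n < r := by omega
    refine ⟨⟨Equiv.refl (Fin n), ?_⟩⟩
    intro a b
    show (SimpleGraph.turanGraph n r).Adj a b ↔ G.Adj a b
    have h1 : (SimpleGraph.turanGraph n r).Adj a b ↔ (a:ℕ)%r ≠ (b:ℕ)%r := Iff.rfl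
    rw [h1, hGadj a b, Nat.mod_eq_of_lt (lt_trans a.2 hnr), Nat.mod_eq_of_lt (lt_trans b.2 hnr)]
    constructor
    · intro h hcon
      exact h (by rw [hcon])
    · intro h hcon
      exact h (Fin.ext hcon)
  · have hk1 : 1 ≤ k := by omega
    have hrn : r ≤ n := by
      have h2 : 2*r ≤ (k+1)*r := Nat.mul_le_mul_right r (by omega)
      have h3 : 2*r = r + r := by ring
      omega
    have htr := trans_of_closed G hfree hn' hrn hdeg hclosed
    exact structure_iso hr hk1 hn' G hfree hdeg htr
end

section
/- Let G be a graph on n vertices with clique number r and algebraic connectivity α(G) > 0. Then r ≤ n + 1 - 4/(n·α(G)). -/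
open SimpleGraph Matrix BigOperators Finset

set_option linter.unusedSectionVars false

namespace Aux14

variable {V : Type*} [Fintype V] [DecidableEq V] {G : SimpleGraph V} [DecidableRel G.Adj]

lemma quad_eq (x : V → ℝ) :
    x ⬝ᵥ (G.lapMatrix ℝ) *ᵥ x
      = (∑ i, ∑ j, if G.Adj i j then (x i - x j)^2 else 0) / 2 := by
  rw [← Matrix.toLinearMap₂'_apply', lapMatrix_toLinearMap₂']

lemma quad_nonneg (x : V → ℝ) : 0 ≤ x ⬝ᵥ (G.lapMatrix ℝ) *ᵥ x := by
  rw [quad_eq]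
  positivity

lemma walk_sq_le (x : V → ℝ) {u v : V} (p : G.Walk u v) :
    (x u - x v)^2 ≤ (p.length : ℝ) *
      ((p.darts.map (fun d => (x d.fst - x d.snd)^2)).sum) := by
  induction p with
  | nil => simp
  | @cons a b c h q ih =>
    rw [Walk.darts_cons, List.map_cons, List.sum_cons, Walk.length_cons]
    push_cast
    set A := x a - x b with hA
    set C := x b - x c with hC
    set L : ℝ := (q.length : ℝ) with hL
    set S : ℝ := (q.darts.map (fun d => (x d.fst - x d.snd)^2)).sum with hS
    have hS0 : 0 ≤ S := by
      apply List.sum_nonneg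
      intro y hy
      obtain ⟨d, _, rfl⟩ := List.mem_map.mp hy
      positivity
    have hL0 : (0:ℝ) ≤ L := by positivity
    have hxac : x a - x c = A + C := by rw [hA, hC]; ring
    rw [hxac]
    rcases Nat.eq_zero_or_pos q.length with h0 | hpos
    · have hL' : L = 0 := by rw [hL, h0]; norm_num
      have hC0 : C = 0 := by nlinarith [ih]
      rw [hL', hC0]
      nlinarith [sq_nonneg A]
    · have hLpos : (0:ℝ) < L := by rw [hL]; exact_mod_cast hpos
      nlinarith [ih, sq_nonneg (L * A - C), mul_nonneg hL0 hS0, sq_nonneg A,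
        mul_pos hLpos hLpos, mul_nonneg (mul_nonneg hL0 hL0) (sq_nonneg A)]

lemma dartsum_le (x : V → ℝ) {u v : V} (p : G.Walk u v) (hp : p.IsPath) :
    ((p.darts.map (fun d => (x d.fst - x d.snd)^2)).sum)
      ≤ (∑ i, ∑ j, if G.Adj i j then (x i - x j)^2 else 0) / 2 := by
  classical
  set t : G.Dart → ℝ := fun d => (x d.fst - x d.snd)^2 with ht
  have hnodup : p.darts.Nodup := Walk.darts_nodup_of_support_nodup hp.support_nodup
  set D : Finset G.Dart := p.darts.toFinset with hD
  have hlist : (p.darts.map t).sum = ∑ d ∈ D, t d := by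
    rw [List.sum_toFinset _ hnodup]
  have hsymm : ∀ d ∈ D, d.symm ∉ D := by
    intro d hd hsd
    have hinj := List.inj_on_of_nodup_map (hp.isTrail.edges_nodup)
    have : d = d.symm := by
      apply hinj (List.mem_toFinset.mp hd) (List.mem_toFinset.mp hsd)
      rw [Dart.edge_symm]
    exact d.symm_ne this.symm
  set P : Finset (V × V) := (univ ×ˢ univ).filter (fun q : V × V => G.Adj q.1 q.2) with hP
  have hQ : (∑ i, ∑ j, if G.Adj i j then (x i - x j)^2 else 0)
      = ∑ q ∈ P, (x q.1 - x q.2)^2 := by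
    rw [hP, Finset.sum_filter, Finset.sum_product]
  set D1 : Finset (V × V) := D.image Dart.toProd with hD1
  set D2 : Finset (V × V) := D.image (fun d => d.symm.toProd) with hD2
  have hs2inj : Function.Injective (fun d : G.Dart => d.symm.toProd) :=
    Dart.toProd_injective.comp Dart.symm_involutive.injective
  have hsum1 : ∑ q ∈ D1, (x q.1 - x q.2)^2 = ∑ d ∈ D, t d := by
    rw [hD1, Finset.sum_image (fun a _ b _ h => Dart.toProd_injective h)]
  have hsum2 : ∑ q ∈ D2, (x q.1 - x q.2)^2 = ∑ d ∈ D, t d := by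
    rw [hD2, Finset.sum_image (fun a _ b _ h => hs2inj h)]
    apply Finset.sum_congr rfl
    intro d _
    simp only [Dart.symm_toProd, Prod.fst_swap, Prod.snd_swap, ht]
    ring
  have hdisj : Disjoint D1 D2 := by
    rw [Finset.disjoint_left]
    rintro q hq1 hq2
    obtain ⟨d, hd, rfl⟩ := Finset.mem_image.mp hq1
    obtain ⟨d', hd', he⟩ := Finset.mem_image.mp hq2
    have : d' = d.symm := by
      apply hs2inj
      simp only [he, Dart.symm_toProd]
      exact (Prod.swap_swap _).symm ▸ rfl
    exact hsymm d hd (this ▸ hd')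
  have hsub : D1 ∪ D2 ⊆ P := by
    intro q hq
    rcases Finset.mem_union.mp hq with hq | hq <;>
      obtain ⟨d, _, rfl⟩ := Finset.mem_image.mp hq
    · exact Finset.mem_filter.mpr ⟨Finset.mem_product.mpr ⟨mem_univ _, mem_univ _⟩, d.adj⟩
    · exact Finset.mem_filter.mpr ⟨Finset.mem_product.mpr ⟨mem_univ _, mem_univ _⟩, d.symm.adj⟩
  have hunion : ∑ q ∈ D1 ∪ D2, (x q.1 - x q.2)^2 = 2 * ∑ d ∈ D, t d := by
    rw [Finset.sum_union hdisj, hsum1, hsum2]; ring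
  have hle : ∑ q ∈ D1 ∪ D2, (x q.1 - x q.2)^2 ≤ ∑ q ∈ P, (x q.1 - x q.2)^2 := by
    apply Finset.sum_le_sum_of_subset_of_nonneg hsub
    intro q _ _
    positivity
  rw [hlist, hQ]
  linarith [hunion ▸ hle]

lemma walk_exists_mid (hconn : G.Connected) :
    ∀ {u v : V} (p : G.Walk u v) (i : ℕ), i ≤ p.length →
      ∃ w, G.dist u w ≤ i ∧ G.dist w v ≤ p.length - i := by
  intro u v p
  induction p with
  | @nil w =>
    intro i hi
    exact ⟨w, by rw [SimpleGraph.dist_self]; omega, by rw [SimpleGraph.dist_self]; omega⟩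
  | @cons a b c h q ih =>
    intro i hi
    match i with
    | 0 =>
      refine ⟨a, by simp, ?_⟩
      simpa using SimpleGraph.dist_le (Walk.cons h q)
    | (j+1) =>
      obtain ⟨w, h1, h2⟩ := ih j (by simpa [Walk.length_cons] using hi)
      refine ⟨w, ?_, ?_⟩
      · calc G.dist a w ≤ G.dist a b + G.dist b w := hconn.dist_triangle
          _ ≤ 1 + j := by
            have : G.dist a b = 1 := SimpleGraph.dist_eq_one_iff_adj.mpr h
            omega
          _ = j + 1 := by omega
      · simpa [Walk.length_cons] using h2

lemma exists_dist_eq (hconn : G.Connected) (u v : V) {i : ℕ} (hi : i ≤ G.dist u v) :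
    ∃ w, G.dist u w = i := by
  obtain ⟨p, hp⟩ := (hconn.preconnected u v).exists_walk_length_eq_dist
  obtain ⟨w, h1, h2⟩ := walk_exists_mid hconn p i (by rw [hp]; exact hi)
  have htri : G.dist u v ≤ G.dist u w + G.dist w v := hconn.dist_triangle
  rw [hp] at h2
  exact ⟨w, by omega⟩

lemma dist_count (hconn : G.Connected) {r : ℕ} (hr : G.cliqueNum = r) (u v : V) :
    G.dist u v + r ≤ Fintype.card V + 1 := by
  classical
  obtain ⟨K, hK⟩ := G.exists_isNClique_cliqueNum
  rw [hr] at hK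
  set L := G.dist u v with hL
  have hex : ∀ i : ℕ, ∃ w, i ≤ L → G.dist u w = i := by
    intro i
    by_cases hi : i ≤ L
    · obtain ⟨w, hw⟩ := exists_dist_eq hconn u v hi
      exact ⟨w, fun _ => hw⟩
    · exact ⟨u, fun h => absurd h hi⟩
  choose f hf using hex
  set A : Finset V := (Finset.range (L+1)).image f with hA
  have hfd : ∀ i ∈ Finset.range (L+1), G.dist u (f i) = i := by
    intro i hi
    exact hf i (Nat.lt_succ_iff.mp (Finset.mem_range.mp hi))
  have hinj : Set.InjOn f (Finset.range (L+1)) := by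
    intro i hi j hj hij
    have h1 := hfd i (Finset.mem_coe.mp hi)
    have h2 := hfd j (Finset.mem_coe.mp hj)
    rw [hij] at h1
    omega
  have hcardA : A.card = L + 1 := by
    rw [hA, Finset.card_image_of_injOn hinj, Finset.card_range]
  have hdinj : Set.InjOn (G.dist u) A := by
    intro a ha b hb hab
    obtain ⟨i, hi, rfl⟩ := Finset.mem_image.mp ha
    obtain ⟨j, hj, rfl⟩ := Finset.mem_image.mp hb
    rw [hfd i hi, hfd j hj] at hab
    rw [hab]
  have hAK : (A ∩ K).card ≤ 2 := by
    rcases (A ∩ K).eq_empty_or_nonempty with he | hne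
    · rw [he]; simp
    · obtain ⟨a0, ha0, hmin⟩ := Finset.exists_min_image (A ∩ K) (G.dist u) hne
      set t0 := G.dist u a0 with ht0
      have hmap : ∀ b ∈ A ∩ K, G.dist u b ∈ ({t0, t0 + 1} : Finset ℕ) := by
        intro b hb
        have h1 : t0 ≤ G.dist u b := hmin b hb
        have h2 : G.dist u b ≤ t0 + 1 := by
          by_cases hba : b = a0
          · rw [hba]; omega
          · have hadj : G.Adj a0 b := hK.isClique
              (Finset.mem_coe.mpr (Finset.mem_of_mem_inter_right ha0))
              (Finset.mem_coe.mpr (Finset.mem_of_mem_inter_right hb)) (Ne.symm hba)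
            calc G.dist u b ≤ G.dist u a0 + G.dist a0 b := hconn.dist_triangle
              _ = t0 + 1 := by rw [SimpleGraph.dist_eq_one_iff_adj.mpr hadj]
        simp only [Finset.mem_insert, Finset.mem_singleton]
        omega
      calc (A ∩ K).card ≤ ({t0, t0 + 1} : Finset ℕ).card :=
            Finset.card_le_card_of_injOn (G.dist u) hmap
              (hdinj.mono (fun a ha => Finset.mem_of_mem_inter_left ha))
        _ ≤ 2 := Finset.card_insert_le _ _ |>.trans (by simp)
  have hcardK : K.card = r := hK.card_eq
  have hun : (A ∪ K).card ≤ Fintype.card V := by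
    rw [← Finset.card_univ]
    exact Finset.card_le_card (Finset.subset_univ _)
  have := Finset.card_union_add_card_inter A K
  omega

lemma element_bound {r : ℕ} (hr : G.cliqueNum = r) (hconn : G.Connected)
    (x : V → ℝ) (hx : x ≠ 0) (hsum : ∑ v, x v = 0) :
    4 / ((Fintype.card V : ℝ) * ((Fintype.card V : ℝ) + 1 - r)) ≤
      (x ⬝ᵥ (G.lapMatrix ℝ) *ᵥ x) / (x ⬝ᵥ x) := by
  classical
  set N : ℕ := Fintype.card V with hN
  set Q : ℝ := x ⬝ᵥ (G.lapMatrix ℝ) *ᵥ x with hQdef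
  have hQ0 : 0 ≤ Q := quad_nonneg x
  have hSdef : x ⬝ᵥ x = ∑ w, x w ^ 2 := by
    simp [dotProduct, sq]
  obtain ⟨w0, hw0⟩ : ∃ w, x w ≠ 0 := by
    by_contra hc
    push_neg at hc
    exact hx (funext hc)
  have hSpos : 0 < x ⬝ᵥ x := by
    rw [hSdef]
    have h1 : (0:ℝ) < x w0 ^ 2 := by positivity
    have h2 : ∀ w ∈ univ, 0 ≤ x w ^ 2 := fun w _ => sq_nonneg _
    calc (0:ℝ) < x w0 ^ 2 := h1
      _ ≤ ∑ w, x w ^ 2 := Finset.single_le_sum h2 (mem_univ w0)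
  have hNpos : 0 < N := Fintype.card_pos_iff.mpr ⟨w0⟩
  have hrN : r ≤ N := by
    obtain ⟨K, hK⟩ := G.exists_isNClique_cliqueNum
    rw [hr] at hK
    rw [← hK.card_eq, hN, ← Finset.card_univ]
    exact Finset.card_le_card (Finset.subset_univ _)
  obtain ⟨u, -, hu⟩ := Finset.exists_max_image (univ : Finset V) x ⟨w0, mem_univ w0⟩
  obtain ⟨v, -, hv⟩ := Finset.exists_min_image (univ : Finset V) x ⟨w0, mem_univ w0⟩
  have hkey : ∀ w, x w ^ 2 ≤ (x u + x v) * x w - x u * x v := by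
    intro w
    have h1 : 0 ≤ (x u - x w) * (x w - x v) :=
      mul_nonneg (by linarith [hu w (mem_univ w)]) (by linarith [hv w (mem_univ w)])
    nlinarith [h1]
  have hS4 : (x ⬝ᵥ x) * 4 ≤ (N : ℝ) * (x u - x v)^2 := by
    have hsum2 : ∑ w, x w ^ 2 ≤ ∑ w, ((x u + x v) * x w - x u * x v) :=
      Finset.sum_le_sum (fun w _ => hkey w)
    have hrhs : ∑ w, ((x u + x v) * x w - x u * x v) = -(N : ℝ) * (x u * x v) := by
      rw [Finset.sum_sub_distrib, ← Finset.mul_sum, hsum, Finset.sum_const, Finset.card_univ]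
      ring
    rw [hSdef]
    have hNn : (0:ℝ) ≤ (N:ℝ) := Nat.cast_nonneg N
    nlinarith [hsum2, hrhs ▸ hsum2, sq_nonneg (x u + x v), mul_nonneg hNn (sq_nonneg (x u + x v))]
  have hL : (x u - x v)^2 ≤ ((N : ℝ) + 1 - r) * Q := by
    obtain ⟨p, hpath, hplen⟩ := (hconn.preconnected u v).exists_path_of_dist
    have h1 := walk_sq_le x p
    have h2 := dartsum_le x p hpath
    have h3 : (p.length : ℝ) ≤ (N : ℝ) + 1 - r := by
      have hc := dist_count hconn hr u v
      rw [← hplen] at hc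
      have : (p.length : ℝ) + r ≤ (N : ℝ) + 1 := by exact_mod_cast hc
      linarith
    have hQform : (∑ i, ∑ j, if G.Adj i j then (x i - x j)^2 else 0) / 2 = Q := by
      rw [hQdef, quad_eq]
    rw [hQform] at h2
    have hlen0 : (0:ℝ) ≤ (p.length : ℝ) := Nat.cast_nonneg _
    calc (x u - x v)^2
        ≤ (p.length : ℝ) * ((p.darts.map (fun d => (x d.fst - x d.snd)^2)).sum) := h1
      _ ≤ (p.length : ℝ) * Q := mul_le_mul_of_nonneg_left h2 hlen0
      _ ≤ ((N : ℝ) + 1 - r) * Q := mul_le_mul_of_nonneg_right h3 hQ0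
  have hNr : (0:ℝ) < (N : ℝ) + 1 - r := by
    have : (r:ℝ) ≤ (N:ℝ) := Nat.cast_le.mpr hrN
    linarith
  have hNR : (0:ℝ) < (N:ℝ) := Nat.cast_pos.mpr hNpos
  rw [div_le_div_iff₀ (by positivity) hSpos]
  have hstep : (N : ℝ) * (x u - x v)^2 ≤ (N:ℝ) * (((N : ℝ) + 1 - r) * Q) :=
    mul_le_mul_of_nonneg_left hL (le_of_lt hNR)
  nlinarith [hS4, hstep]

lemma connected_of_pos (G : SimpleGraph V) [DecidableRel G.Adj]
    (hα : 0 < sInf {a : ℝ | ∃ x : V → ℝ, x ≠ 0 ∧ ∑ v, x v = 0 ∧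
      a = (x ⬝ᵥ (G.lapMatrix ℝ).mulVec x) / (x ⬝ᵥ x)})
    (hV : Nonempty V) : G.Connected := by
  classical
  set S : Set ℝ := {a : ℝ | ∃ x : V → ℝ, x ≠ 0 ∧ ∑ v, x v = 0 ∧
      a = (x ⬝ᵥ (G.lapMatrix ℝ).mulVec x) / (x ⬝ᵥ x)} with hSdef
  have hnonneg : ∀ a ∈ S, 0 ≤ a := by
    rintro a ⟨x, hx, hsum, rfl⟩
    apply div_nonneg (quad_nonneg x)
    exact Finset.sum_nonneg fun i _ => mul_self_nonneg _
  rw [connected_iff]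
  refine ⟨?_, hV⟩
  by_contra hpc
  rw [SimpleGraph.Preconnected] at hpc
  push_neg at hpc
  obtain ⟨u, v, huv⟩ := hpc
  set A : Finset V := univ.filter (fun w => G.Reachable u w) with hA
  set k : ℕ := A.card with hk
  have hkle : k ≤ Fintype.card V := by
    rw [hk, ← Finset.card_univ]
    exact Finset.card_le_card (Finset.subset_univ _)
  have hkn : k < Fintype.card V := by
    have hsub : A ⊆ univ.erase v := by
      intro w hw
      rw [Finset.mem_erase]
      refine ⟨?_, mem_univ w⟩
      rintro rfl
      exact huv ((Finset.mem_filter.mp hw).2)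
    calc k ≤ (univ.erase v).card := Finset.card_le_card hsub
      _ < univ.card := Finset.card_erase_lt_of_mem (mem_univ v)
      _ = Fintype.card V := Finset.card_univ
  set y : V → ℝ := fun w =>
    if G.Reachable u w then (Fintype.card V : ℝ) - k else -(k:ℝ) with hy
  have hycompl : (univ.filter (fun w => ¬ G.Reachable u w)).card = Fintype.card V - k := by
    have := Finset.card_filter_add_card_filter_not
      (s := (univ : Finset V)) (p := fun w => G.Reachable u w)
    rw [Finset.card_univ] at this
    rw [hk, hA]
    omega
  have hysum : ∑ w, y w = 0 := by
    rw [hy, Finset.sum_ite, Finset.sum_const, Finset.sum_const, ← hA, ← hk, hycompl]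
    rw [nsmul_eq_mul, nsmul_eq_mul]
    rw [Nat.cast_sub hkle]
    ring
  have hyi : ∀ w, y w = if G.Reachable u w then (Fintype.card V : ℝ) - k else -(k:ℝ) :=
    fun w => rfl
  have hy0 : y ≠ 0 := by
    intro h
    have h1 : y u = 0 := by rw [h]; rfl
    rw [hyi u, if_pos (Reachable.refl u)] at h1
    have : (k:ℝ) < (Fintype.card V : ℝ) := by exact_mod_cast hkn
    linarith
  have hyQ : y ⬝ᵥ (G.lapMatrix ℝ).mulVec y = 0 := by
    rw [show (G.lapMatrix ℝ).mulVec y = (G.lapMatrix ℝ) *ᵥ y from rfl, quad_eq]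
    rw [Finset.sum_eq_zero, zero_div]
    intro i _
    apply Finset.sum_eq_zero
    intro j _
    by_cases hij : G.Adj i j
    · rw [if_pos hij]
      have hreach : G.Reachable u i ↔ G.Reachable u j :=
        ⟨fun h => h.trans hij.reachable, fun h => h.trans hij.symm.reachable⟩
      have hyij : y i = y j := by
        rw [hyi i, hyi j]
        by_cases h : G.Reachable u i
        · rw [if_pos h, if_pos (hreach.mp h)]
        · rw [if_neg h, if_neg (fun h' => h (hreach.mpr h'))]
      rw [hyij]
      ring
    · rw [if_neg hij]
  have h0S : (0:ℝ) ∈ S := ⟨y, hy0, hysum, by rw [hyQ, zero_div]⟩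
  have hle := csInf_le ⟨0, fun a ha => hnonneg a ha⟩ h0S
  linarith

lemma main_aux (G : SimpleGraph V) [DecidableRel G.Adj] {r : ℕ}
    (hr : G.cliqueNum = r)
    (hα : 0 < sInf {a : ℝ | ∃ x : V → ℝ, x ≠ 0 ∧ ∑ v, x v = 0 ∧
      a = (x ⬝ᵥ (G.lapMatrix ℝ).mulVec x) / (x ⬝ᵥ x)})
    (hbound : ∀ a ∈ {a : ℝ | ∃ x : V → ℝ, x ≠ 0 ∧ ∑ v, x v = 0 ∧
      a = (x ⬝ᵥ (G.lapMatrix ℝ).mulVec x) / (x ⬝ᵥ x)},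
      4 / ((Fintype.card V : ℝ) * ((Fintype.card V : ℝ) + 1 - r)) ≤ a)
    (hV : Nonempty V) (hrN : r ≤ Fintype.card V) :
    (r : ℝ) ≤ (Fintype.card V : ℝ) + 1 -
      4 / ((Fintype.card V : ℝ) * sInf {a : ℝ | ∃ x : V → ℝ, x ≠ 0 ∧ ∑ v, x v = 0 ∧
        a = (x ⬝ᵥ (G.lapMatrix ℝ).mulVec x) / (x ⬝ᵥ x)}) := by
  set S : Set ℝ := {a : ℝ | ∃ x : V → ℝ, x ≠ 0 ∧ ∑ v, x v = 0 ∧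
      a = (x ⬝ᵥ (G.lapMatrix ℝ).mulVec x) / (x ⬝ᵥ x)} with hSdef
  have hne : S.Nonempty := by
    by_contra h
    rw [Set.not_nonempty_iff_eq_empty] at h
    rw [h, Real.sInf_empty] at hα
    exact lt_irrefl 0 hα
  set α : ℝ := sInf S with hαdef
  have hge : 4 / ((Fintype.card V : ℝ) * ((Fintype.card V : ℝ) + 1 - r)) ≤ α :=
    le_csInf hne hbound
  set N : ℝ := (Fintype.card V : ℝ) with hNdef
  have hNpos : (0:ℝ) < N := by
    rw [hNdef]
    exact_mod_cast Fintype.card_pos_iff.mpr hV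
  have hrN' : (r:ℝ) ≤ N := by rw [hNdef]; exact_mod_cast hrN
  have hd : (0:ℝ) < N + 1 - r := by linarith
  have hαpos : 0 < α := hα
  have h4 : 4 ≤ α * (N * (N + 1 - r)) := (div_le_iff₀ (by positivity)).mp hge
  have hgoal : 4 / (N * α) ≤ N + 1 - r := by
    rw [div_le_iff₀ (by positivity)]
    nlinarith [h4]
  linarith

end Aux14

theorem stmt14 {n r : ℕ} (G : SimpleGraph (Fin n)) (hclique : G.cliqueNum = r)
    (hα : 0 < algConn G) :
    (r : ℝ) ≤ (n : ℝ) + 1 - 4 / ((n : ℝ) * algConn G) := by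
  letI : DecidableEq (Fin n) := Classical.decEq _
  letI : DecidableRel G.Adj := Classical.decRel _
  have heq : algConn G = sInf {a : ℝ | ∃ x : Fin n → ℝ, x ≠ 0 ∧ ∑ v, x v = 0 ∧
      a = (x ⬝ᵥ (G.lapMatrix ℝ).mulVec x) / (x ⬝ᵥ x)} := rfl
  rw [heq] at hα ⊢
  have hne : {a : ℝ | ∃ x : Fin n → ℝ, x ≠ 0 ∧ ∑ v, x v = 0 ∧
      a = (x ⬝ᵥ (G.lapMatrix ℝ).mulVec x) / (x ⬝ᵥ x)}.Nonempty := by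
    by_contra h
    rw [Set.not_nonempty_iff_eq_empty] at h
    rw [h, Real.sInf_empty] at hα
    exact lt_irrefl 0 hα
  obtain ⟨a0, x0, hx0, -, -⟩ := hne
  have hV : Nonempty (Fin n) := by
    by_contra h
    exact hx0 (funext fun w => absurd ⟨w⟩ h)
  have hrN : r ≤ n := by
    obtain ⟨K, hK⟩ := G.exists_isNClique_cliqueNum
    rw [hclique] at hK
    calc r = K.card := hK.card_eq.symm
      _ ≤ Fintype.card (Fin n) := Finset.card_le_univ K
      _ = n := Fintype.card_fin n
  have hconn : G.Connected := Aux14.connected_of_pos G hα hV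
  have hbound : ∀ a ∈ {a : ℝ | ∃ x : Fin n → ℝ, x ≠ 0 ∧ ∑ v, x v = 0 ∧
      a = (x ⬝ᵥ (G.lapMatrix ℝ).mulVec x) / (x ⬝ᵥ x)},
      4 / ((Fintype.card (Fin n) : ℝ) * ((Fintype.card (Fin n) : ℝ) + 1 - r)) ≤ a := by
    rintro a ⟨x, hx, hs, rfl⟩
    exact Aux14.element_bound hclique hconn x hx hs
  have h := Aux14.main_aux G hclique hα hbound hV (by rw [Fintype.card_fin]; exact hrN)
  rw [Fintype.card_fin] at h
  exact h
end
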